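/- arXiv:2410.10194 — 3 statements merged into one kernel-verified Lean document; each statement's English description precedes it below -/
import Mathlib

section
/- There exists a universal constant c > 0 such that the following holds. Let G = (V,E) be a finite simple graph on n ≥ 2 vertices, let α > 0, and let m ≥ 1 be such that there is no subset U ⊆ V with |U| ≥ m for which the induced subgraph G[U] is an α-expander. Then V can be partitioned into sets {A_i}_i such that |A_i| < 3m for every i, and the number of edges of G whose two endpoints lie in different parts A_i, A_j (i ≠ j) is at most c·log(n)·α·n. -/
open scoped Classical

/-- A Pauli operator on `n` qubits, modulo phase, in symplectic representation. -/
abbrev PauliVec (n : ℕ) : Type := (Fin n → ZMod 2) × (Fin n → ZMod 2)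

/-- The support of a Pauli operator: qubits where it acts nontrivially. -/
def PauliSupport {n : ℕ} (v : PauliVec n) : Finset (Fin n) :=
  Finset.univ.filter fun i => v.1 i ≠ 0 ∨ v.2 i ≠ 0

/-- The weight of a Pauli operator. -/
def PauliWeight {n : ℕ} (v : PauliVec n) : ℕ := (PauliSupport v).card

/-- The symplectic form; it vanishes iff the corresponding Paulis commute. -/
def sympForm {n : ℕ} (v w : PauliVec n) : ZMod 2 :=
  ∑ i, (v.1 i * w.2 i + v.2 i * w.1 i)

lemma sympForm_add_left {n : ℕ} (a b w : PauliVec n) :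
    sympForm (a + b) w = sympForm a w + sympForm b w := by
  simp only [sympForm, Prod.fst_add, Prod.snd_add, Pi.add_apply]
  rw [← Finset.sum_add_distrib]
  exact Finset.sum_congr rfl fun i _ => by ring

lemma sympForm_smul_left {n : ℕ} (c : ZMod 2) (a w : PauliVec n) :
    sympForm (c • a) w = c * sympForm a w := by
  simp only [sympForm, Prod.smul_fst, Prod.smul_snd, Pi.smul_apply, smul_eq_mul,
    Finset.mul_sum]
  exact Finset.sum_congr rfl fun i _ => by ring

/-- The symplectic orthogonal complement of a subspace of Pauli operators. -/
def sympCompl {n : ℕ} (W : Submodule (ZMod 2) (PauliVec n)) :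
    Submodule (ZMod 2) (PauliVec n) where
  carrier := {v | ∀ w ∈ W, sympForm v w = 0}
  zero_mem' := by
    intro w _
    simp [sympForm]
  add_mem' := by
    intro a b ha hb w hw
    rw [sympForm_add_left, ha w hw, hb w hw, add_zero]
  smul_mem' := by
    intro c v hv w hw
    rw [sympForm_smul_left, hv w hw, mul_zero]

/-- The gauge group (as an `F₂`-subspace) spanned by a family of gauge checks. -/
def gaugeGroup {N r : ℕ} (g : Fin r → PauliVec N) : Submodule (ZMod 2) (PauliVec N) :=
  Submodule.span (ZMod 2) (Set.range g)

/-- The number of logical qubits of the subsystem code with gauge checks `g`: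
`k = (dim G^⊥ − dim (G ∩ G^⊥))/2`. -/
noncomputable def subsysLogicalQubits {N r : ℕ} (g : Fin r → PauliVec N) : ℕ :=
  (Module.finrank (ZMod 2) ↥(sympCompl (gaugeGroup g)) -
    Module.finrank (ZMod 2) ↥(gaugeGroup g ⊓ sympCompl (gaugeGroup g))) / 2

/-- The dressed distance of the subsystem code with gauge checks `g`:
`d = min {|v| : v ∈ (G + G^⊥) ∖ G}`. -/
noncomputable def dressedDistance {N r : ℕ} (g : Fin r → PauliVec N) : ℕ :=
  sInf {w : ℕ | ∃ v : PauliVec N,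
    v ∈ (gaugeGroup g ⊔ sympCompl (gaugeGroup g) : Submodule (ZMod 2) (PauliVec N)) ∧
    v ∉ gaugeGroup g ∧ PauliWeight v = w}

/-- The stabilizer group (as an `F₂`-subspace) spanned by a family of checks. -/
def stabGroup {n m : ℕ} (s : Fin m → PauliVec n) : Submodule (ZMod 2) (PauliVec n) :=
  Submodule.span (ZMod 2) (Set.range s)

/-- The number of logical qubits of a stabilizer code: `k = n − dim S`. -/
noncomputable def stabLogicalQubits {n m : ℕ} (s : Fin m → PauliVec n) : ℕ :=
  n - Module.finrank (ZMod 2) ↥(stabGroup s)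

/-- The distance of a stabilizer code: `d = min {|v| : v ∈ S^⊥ ∖ S}`. -/
noncomputable def stabDistance {n m : ℕ} (s : Fin m → PauliVec n) : ℕ :=
  sInf {w : ℕ | ∃ v : PauliVec n,
    v ∈ sympCompl (stabGroup s) ∧ v ∉ stabGroup s ∧ PauliWeight v = w}

/-- The degree of a qubit: the number of checks whose support contains it. -/
noncomputable def checkDegree {n m : ℕ} (s : Fin m → PauliVec n) (q : Fin n) : ℕ :=
  (Finset.univ.filter fun i => q ∈ PauliSupport (s i)).card

/-- The degree of a qubit in a subsystem code, not counting single-qubit gauge checks: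
the number of gauge checks of weight at least `2` whose support contains it. -/
noncomputable def gaugeDegree {N r : ℕ} (g : Fin r → PauliVec N) (q : Fin N) : ℕ :=
  (Finset.univ.filter fun i => q ∈ PauliSupport (g i) ∧ 2 ≤ PauliWeight (g i)).card

/-- The code with gauge checks `g` is local in `D` dimensions with constant `C`:
there is a layout map `π` to `ℤ^D` with at most `C` qubits per lattice point such
that the support of every gauge check has `ℓ∞`-diameter at most `C`. -/
def LocalInDim {N r : ℕ} (g : Fin r → PauliVec N) (D : ℕ) (C : ℕ) : Prop :=
  ∃ π : Fin N → (Fin D → ℤ),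
    (∀ p : Fin D → ℤ, (Finset.univ.filter fun q => π q = p).card ≤ C) ∧
    (∀ i : Fin r, ∀ q ∈ PauliSupport (g i), ∀ q' ∈ PauliSupport (g i), ∀ j : Fin D,
      |π q j - π q' j| ≤ (C : ℤ))

/-- The number of edges of `G` with one endpoint in `S` and the other outside `S`. -/
noncomputable def cutEdges {V : Type} [Fintype V] (G : SimpleGraph V) (S : Finset V) : ℕ :=
  (Finset.univ.filter fun p : V × V => p.1 ∈ S ∧ p.2 ∉ S ∧ G.Adj p.1 p.2).card

/-- `G` is an `α`-expander: every cut `(S, V∖S)` has at least `α·min(|S|,|V∖S|)` edges. -/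
def IsExpander {V : Type} [Fintype V] (G : SimpleGraph V) (α : ℝ) : Prop :=
  ∀ S : Finset V, S.Nonempty → S ≠ Finset.univ →
    α * min (S.card : ℝ) ((Sᶜ : Finset V).card : ℝ) ≤ (cutEdges G S : ℝ)

/-- The code with gauge checks `g` is local on the graph `G` with constant `C`:
there is a map `ρ` from qubits to vertices with at most `C` qubits per vertex, such
that every gauge check is supported on qubits mapped to a single vertex or to two
adjacent vertices. -/
def LocalOnGraph {V : Type} [Fintype V] (G : SimpleGraph V) {N r : ℕ}
    (g : Fin r → PauliVec N) (C : ℕ) : Prop :=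
  ∃ ρ : Fin N → V,
    (∀ v : V, (Finset.univ.filter fun q => ρ q = v).card ≤ C) ∧
    (∀ i : Fin r, ∃ u v : V, (u = v ∨ G.Adj u v) ∧
      ∀ q ∈ PauliSupport (g i), ρ q = u ∨ ρ q = v)

lemma aux_log_le (s t : ℕ) (hs : 1 ≤ s) (hst : s ≤ t) :
    (s : ℝ) * Real.log 2 + s * Real.log s + t * Real.log t
      ≤ ((s : ℝ) + t) * Real.log ((s : ℝ) + t) := by
  have h1 : (1:ℝ) ≤ s := by exact_mod_cast hs
  have h2 : (s:ℝ) ≤ t := by exact_mod_cast hst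
  have hs0 : (0:ℝ) < s := by linarith
  have ht0 : (0:ℝ) < t := by linarith
  have hA : Real.log 2 + Real.log s ≤ Real.log ((s:ℝ)+t) := by
    rw [← Real.log_mul (by norm_num) (ne_of_gt hs0)]
    apply Real.log_le_log (by positivity)
    linarith
  have hB : Real.log t ≤ Real.log ((s:ℝ)+t) :=
    Real.log_le_log ht0 (by linarith)
  calc (s : ℝ) * Real.log 2 + s * Real.log s + t * Real.log t
      = s * (Real.log 2 + Real.log s) + t * Real.log t := by ring
    _ ≤ s * Real.log ((s:ℝ)+t) + t * Real.log ((s:ℝ)+t) :=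
        add_le_add (mul_le_mul_of_nonneg_left hA (by positivity))
          (mul_le_mul_of_nonneg_left hB (by positivity))
    _ = ((s : ℝ) + t) * Real.log ((s : ℝ) + t) := by ring

lemma aux_log (s t : ℕ) (hs : 1 ≤ s) (ht : 1 ≤ t) :
    min (s:ℝ) (t:ℝ) * Real.log 2 + s * Real.log s + t * Real.log t
      ≤ ((s : ℝ) + t) * Real.log ((s : ℝ) + t) := by
  rcases le_total s t with h | h
  · rw [min_eq_left (by exact_mod_cast h : (s:ℝ) ≤ t)]
    exact aux_log_le s t hs h
  · rw [min_eq_right (by exact_mod_cast h : (t:ℝ) ≤ s)]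
    have h' := aux_log_le t s ht h
    rw [add_comm (t:ℝ) s] at h'
    linarith

lemma exists_sparse_cut {V : Type} [Fintype V] (G : SimpleGraph V) (α : ℝ) (U : Finset V)
    (h : ¬ IsExpander (G.induce (↑U : Set V)) α) :
    ∃ S : Finset V, S ⊆ U ∧ S.Nonempty ∧ S ≠ U ∧
      ((Finset.univ.filter fun p : V × V => p.1 ∈ S ∧ p.2 ∈ U \ S ∧ G.Adj p.1 p.2).card : ℝ)
        < α * min (S.card : ℝ) (((U \ S).card : ℝ)) := by
  rw [IsExpander] at h
  push_neg at h
  obtain ⟨S', hne, hneq, hlt⟩ := h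
  set S : Finset V := S'.map (Function.Embedding.subtype _) with hS
  have hSU : S ⊆ U := by
    intro x hx
    rw [hS, Finset.mem_map] at hx
    obtain ⟨a, _, rfl⟩ := hx
    exact Finset.mem_coe.mp a.2
  have hcardS : S.card = S'.card := Finset.card_map _
  have hcardU : Fintype.card (↑U : Set V) = U.card := Fintype.card_coe U
  have hcardlt : S.card < U.card := by
    rw [hcardS, ← hcardU, ← Finset.card_univ]
    exact Finset.card_lt_card (Finset.ssubset_univ_iff.mpr hneq)
  have hSneU : S ≠ U := by
    intro hEq; rw [hEq] at hcardlt; exact lt_irrefl _ hcardlt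

  have hcut : cutEdges (G.induce (↑U : Set V)) S'
      = (Finset.univ.filter fun p : V × V => p.1 ∈ S ∧ p.2 ∈ U \ S ∧ G.Adj p.1 p.2).card := by
    rw [cutEdges]
    apply Finset.card_bij (fun p _ => ((p.1 : V), (p.2 : V)))
    · intro p hp
      simp only [Finset.mem_filter, Finset.mem_univ, true_and] at hp ⊢
      obtain ⟨h1, h2, h3⟩ := hp
      refine ⟨Finset.mem_map' _ |>.mpr h1, ?_, by simpa using h3⟩
      rw [Finset.mem_sdiff]
      refine ⟨by simpa using p.2.2, fun hc => h2 ?_⟩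
      rw [hS, Finset.mem_map] at hc
      obtain ⟨a, ha, hav⟩ := hc
      have : a = p.2 := Subtype.ext (by simpa using hav)
      rwa [← this]
    · intro p hp q hq hpq
      have h1 : (p.1 : V) = q.1 := congrArg Prod.fst hpq
      have h2 : (p.2 : V) = q.2 := congrArg Prod.snd hpq
      exact Prod.ext (Subtype.ext h1) (Subtype.ext h2)
    · intro q hq
      simp only [Finset.mem_filter, Finset.mem_univ, true_and] at hq
      obtain ⟨h1, h2, h3⟩ := hq
      have hq1U : q.1 ∈ (↑U : Set V) := by simpa using hSU h1
      have hq2U : q.2 ∈ (↑U : Set V) := by simpa using (Finset.mem_sdiff.mp h2).1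
      refine ⟨(⟨q.1, hq1U⟩, ⟨q.2, hq2U⟩), ?_, rfl⟩
      simp only [Finset.mem_filter, Finset.mem_univ, true_and]
      refine ⟨?_, ?_, by simpa using h3⟩
      · rw [hS, Finset.mem_map] at h1
        obtain ⟨a, ha, hav⟩ := h1
        have : a = ⟨q.1, hq1U⟩ := Subtype.ext (by simpa using hav)
        rwa [← this]
      · intro hc
        exact (Finset.mem_sdiff.mp h2).2 (Finset.mem_map' _ |>.mpr hc)
  refine ⟨S, hSU, ?_, hSneU, ?_⟩
  · obtain ⟨x, hx⟩ := hne
    exact ⟨_, Finset.mem_map_of_mem _ hx⟩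
  · rw [← hcut]
    have h1 : (S.card : ℝ) = S'.card := by exact_mod_cast hcardS
    have h2 : ((U \ S).card : ℝ) = ((Fintype.card (↑U : Set V) - S'.card : ℕ) : ℝ) := by
      congr 1
      rw [Finset.card_sdiff_of_subset hSU, hcardS, ← hcardU]
    rw [@Finset.card_compl _ (fun a b => Classical.propDecidable (a = b)) _ S'] at hlt
    rw [h1, h2]; exact hlt

noncomputable def badPairs {V : Type} [Fintype V] (G : SimpleGraph V) {t : ℕ}
    (A : Fin t → Finset V) (U : Finset V) : Finset (V × V) :=
  Finset.univ.filter fun p : V × V =>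
    p.1 ∈ U ∧ p.2 ∈ U ∧ G.Adj p.1 p.2 ∧ ¬ ∃ i, p.1 ∈ A i ∧ p.2 ∈ A i

lemma partition_key {V : Type} [Fintype V] (G : SimpleGraph V) (α : ℝ) (m : ℕ)
    (hα : 0 < α)
    (hExp : ∀ U : Finset V, m ≤ U.card → ¬ IsExpander (G.induce (↑U : Set V)) α)
    (U : Finset V) :
    ∃ (t : ℕ) (A : Fin t → Finset V),
      (∀ v ∈ U, ∃! i, v ∈ A i) ∧ (∀ i, A i ⊆ U) ∧ (∀ i, (A i).card < 3 * m) ∧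
      ((badPairs G A U).card : ℝ) ≤ 2 * α * U.card * Real.log U.card / Real.log 2 := by
  induction U using Finset.strongInduction with
  | _ U ih =>
  by_cases hUm : U.card < m
  · -- base case: one part
    refine ⟨1, fun _ => U, ?_, fun _ => le_refl _, fun _ => lt_of_lt_of_le hUm (Nat.le_mul_of_pos_left m (by norm_num)), ?_⟩
    · exact fun v hv => ⟨0, hv, fun j _ => Subsingleton.elim j 0⟩
    · have hbe : badPairs G (fun _ : Fin 1 => U) U = ∅ := by
        ext p
        simp only [badPairs, Finset.mem_filter, Finset.mem_univ, true_and,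
          Finset.notMem_empty, iff_false]
        rintro ⟨h1, h2, -, h4⟩
        exact h4 ⟨0, h1, h2⟩
      rw [hbe]
      simp only [Finset.card_empty, Nat.cast_zero]
      have h2 : (0:ℝ) < Real.log 2 := Real.log_pos one_lt_two
      have := Real.log_natCast_nonneg U.card
      positivity
  · push_neg at hUm
    obtain ⟨S, hSU, hSne, hSneU, hcut⟩ := exists_sparse_cut G α U (hExp U hUm)
    set T := U \ S with hT
    have hTne : T.Nonempty := by
      obtain ⟨x, hxU, hxS⟩ := Finset.exists_of_ssubset (hSU.ssubset_of_ne hSneU)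
      exact ⟨x, Finset.mem_sdiff.mpr ⟨hxU, hxS⟩⟩
    have hST : Disjoint S T := Finset.disjoint_sdiff
    have hTU : T ⊆ U := Finset.sdiff_subset
    have hUcard : U.card = S.card + T.card := by
      rw [hT, Finset.card_sdiff_of_subset hSU]
      have := Finset.card_le_card hSU
      omega
    obtain ⟨t1, A1, hp1, hsub1, hcard1, hb1⟩ := ih S (hSU.ssubset_of_ne hSneU)
    obtain ⟨t2, A2, hp2, hsub2, hcard2, hb2⟩ := ih T (Finset.sdiff_ssubset hSU hSne)
    refine ⟨t1 + t2, Fin.append A1 A2, ?_, ?_, ?_, ?_⟩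
    · -- unique cover
      intro v hv
      by_cases hvS : v ∈ S
      · obtain ⟨i, hi, hu⟩ := hp1 v hvS
        refine ⟨Fin.castAdd t2 i, by simpa [Fin.append_left] using hi, ?_⟩
        intro j hj
        revert hj
        refine Fin.addCases (fun k hk => ?_) (fun k hk => ?_) j
        · rw [Fin.append_left] at hk
          exact congrArg (Fin.castAdd t2) (hu k hk)
        · rw [Fin.append_right] at hk
          exact absurd hvS (Finset.disjoint_left.mp hST.symm (hsub2 k hk))
      · have hvT : v ∈ T := Finset.mem_sdiff.mpr ⟨hv, hvS⟩
        obtain ⟨i, hi, hu⟩ := hp2 v hvT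
        refine ⟨Fin.natAdd t1 i, by simpa [Fin.append_right] using hi, ?_⟩
        intro j hj
        revert hj
        refine Fin.addCases (fun k hk => ?_) (fun k hk => ?_) j
        · rw [Fin.append_left] at hk
          exact absurd hvT (Finset.disjoint_left.mp hST (hsub1 k hk))
        · rw [Fin.append_right] at hk
          exact congrArg (Fin.natAdd t1) (hu k hk)
    · refine Fin.addCases (fun k => ?_) (fun k => ?_)
      · rw [Fin.append_left]; exact (hsub1 k).trans hSU
      · rw [Fin.append_right]; exact (hsub2 k).trans hTU
    · refine Fin.addCases (fun k => ?_) (fun k => ?_)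
      · rw [Fin.append_left]; exact hcard1 k
      · rw [Fin.append_right]; exact hcard2 k
    · -- edge bound
      set C1 : Finset (V × V) :=
        Finset.univ.filter (fun p : V × V => p.1 ∈ S ∧ p.2 ∈ T ∧ G.Adj p.1 p.2) with hC1
      set C2 : Finset (V × V) :=
        Finset.univ.filter (fun p : V × V => p.1 ∈ T ∧ p.2 ∈ S ∧ G.Adj p.1 p.2) with hC2
      have hC2card : C2.card = C1.card := by
        apply Finset.card_bij (fun p _ => (p.2, p.1))
        · intro p hp
          simp only [hC1, hC2, Finset.mem_filter, Finset.mem_univ, true_and] at hp ⊢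
          exact ⟨hp.2.1, hp.1, hp.2.2.symm⟩
        · intro p hp q hq hpq
          have h1 : p.2 = q.2 := congrArg Prod.fst hpq
          have h2 : p.1 = q.1 := congrArg Prod.snd hpq
          exact Prod.ext h2 h1
        · intro q hq
          simp only [hC1, hC2, Finset.mem_filter, Finset.mem_univ, true_and] at hq ⊢
          exact ⟨(q.2, q.1), ⟨hq.2.1, hq.1, hq.2.2.symm⟩, rfl⟩
      have hsubset : badPairs G (Fin.append A1 A2) U ⊆
          (badPairs G A1 S ∪ badPairs G A2 T) ∪ (C1 ∪ C2) := by
        intro p hp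
        simp only [badPairs, Finset.mem_filter, Finset.mem_univ, true_and] at hp
        obtain ⟨h1, h2, h3, h4⟩ := hp
        simp only [badPairs, hC1, hC2, Finset.mem_union, Finset.mem_filter,
          Finset.mem_univ, true_and]
        by_cases hp1 : p.1 ∈ S <;> by_cases hp2 : p.2 ∈ S
        · refine Or.inl (Or.inl ⟨hp1, hp2, h3, ?_⟩)
          rintro ⟨i, hi1, hi2⟩
          exact h4 ⟨Fin.castAdd t2 i, by rwa [Fin.append_left], by rwa [Fin.append_left]⟩
        · exact Or.inr (Or.inl ⟨hp1, Finset.mem_sdiff.mpr ⟨h2, hp2⟩, h3⟩)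
        · exact Or.inr (Or.inr ⟨Finset.mem_sdiff.mpr ⟨h1, hp1⟩, hp2, h3⟩)
        · refine Or.inl (Or.inr ⟨Finset.mem_sdiff.mpr ⟨h1, hp1⟩,
            Finset.mem_sdiff.mpr ⟨h2, hp2⟩, h3, ?_⟩)
          rintro ⟨i, hi1, hi2⟩
          exact h4 ⟨Fin.natAdd t1 i, by rwa [Fin.append_right], by rwa [Fin.append_right]⟩
      have hcards : (badPairs G (Fin.append A1 A2) U).card ≤
          (badPairs G A1 S).card + (badPairs G A2 T).card + 2 * C1.card := by
        calc (badPairs G (Fin.append A1 A2) U).card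
            ≤ ((badPairs G A1 S ∪ badPairs G A2 T) ∪ (C1 ∪ C2)).card :=
              Finset.card_le_card hsubset
          _ ≤ (badPairs G A1 S ∪ badPairs G A2 T).card + (C1 ∪ C2).card :=
              Finset.card_union_le _ _
          _ ≤ ((badPairs G A1 S).card + (badPairs G A2 T).card) + (C1.card + C2.card) :=
              Nat.add_le_add (Finset.card_union_le _ _) (Finset.card_union_le _ _)
          _ = (badPairs G A1 S).card + (badPairs G A2 T).card + 2 * C1.card := by
              rw [hC2card]; ring
      -- real arithmetic
      have hlog2 : (0:ℝ) < Real.log 2 := Real.log_pos one_lt_two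
      have hs1 : 1 ≤ S.card := hSne.card_pos
      have ht1 : 1 ≤ T.card := hTne.card_pos
      have key := aux_log S.card T.card hs1 ht1
      have hUr : (U.card : ℝ) = (S.card : ℝ) + (T.card : ℝ) := by
        rw [hUcard]; push_cast; ring
      have hmain : ((badPairs G (Fin.append A1 A2) U).card : ℝ)
          ≤ 2*α*S.card*Real.log S.card/Real.log 2
            + 2*α*T.card*Real.log T.card/Real.log 2
            + 2 * (α * min (S.card:ℝ) ((T.card:ℝ))) := by
        have h0 : ((badPairs G (Fin.append A1 A2) U).card : ℝ)
            ≤ ((badPairs G A1 S).card : ℝ) + ((badPairs G A2 T).card : ℝ)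
              + 2 * (C1.card : ℝ) := by exact_mod_cast hcards
        have hc' : (C1.card : ℝ) < α * min (S.card:ℝ) ((T.card:ℝ)) := hcut
        linarith
      rw [hUr]
      have hfinal : 2*α*S.card*Real.log S.card/Real.log 2
            + 2*α*T.card*Real.log T.card/Real.log 2
            + 2 * (α * min (S.card:ℝ) ((T.card:ℝ)))
          ≤ 2 * α * ((S.card:ℝ) + T.card) * Real.log ((S.card:ℝ) + T.card) / Real.log 2 := by
        rw [← add_div, div_add' _ _ _ (ne_of_gt hlog2), div_le_div_iff₀ hlog2 hlog2]
        have hα' : (0:ℝ) ≤ 2 * α := by linarith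
        nlinarith [mul_le_mul_of_nonneg_left key hα']
      linarith


/-- **Partitioning graphs with no large expanding subgraph** (Theorem 13 of Baspin).
There is a universal constant `c > 0` such that: if `G` is a graph on `n ≥ 2`
vertices, `α > 0`, `m ≥ 1`, and no vertex subset `U` with `|U| ≥ m` induces an
`α`-expander, then `V` can be partitioned into parts of size `< 3m` with at most
`c·log(n)·α·n` edges between different parts. -/
theorem graph_partitioning : ∃ c : ℝ, 0 < c ∧
    ∀ (V : Type) [Fintype V], ∀ (G : SimpleGraph V) (α : ℝ) (m : ℕ),
      2 ≤ Fintype.card V → 0 < α → 1 ≤ m →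
      (∀ U : Finset V, m ≤ U.card → ¬ IsExpander (G.induce (↑U : Set V)) α) →
      ∃ (t : ℕ) (A : Fin t → Finset V),
        (∀ v : V, ∃! i, v ∈ A i) ∧
        (∀ i, (A i).card < 3 * m) ∧
        (((G.edgeFinset.filter fun e => ¬ ∃ i, ∀ v ∈ e, v ∈ A i).card : ℝ) ≤
          c * Real.log (Fintype.card V) * α * (Fintype.card V)) := by
  have hlog2 : (0:ℝ) < Real.log 2 := Real.log_pos one_lt_two
  refine ⟨2 / Real.log 2, div_pos two_pos hlog2, ?_⟩
  intro V _ G α m hn hα hm hExp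
  obtain ⟨t, A, hp, hsub, hcard, hb⟩ := partition_key G α m hα hExp Finset.univ
  refine ⟨t, A, fun v => hp v (Finset.mem_univ v), hcard, ?_⟩
  have hinj : (G.edgeFinset.filter fun e => ¬ ∃ i, ∀ v ∈ e, v ∈ A i).card
      ≤ (badPairs G A Finset.univ).card := by
    apply Finset.card_le_card_of_injOn (fun e => Quot.out e)
    · intro e he
      simp only [Finset.mem_coe, Finset.mem_filter, SimpleGraph.mem_edgeFinset] at he
      obtain ⟨hadj, hbad⟩ := he
      have hpe : Quot.mk (Sym2.Rel V) (Quot.out e) = e := Quot.out_eq e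
      simp only [badPairs, Finset.mem_coe, Finset.mem_filter, Finset.mem_univ, true_and]
      refine ⟨?_, ?_⟩
      · rw [← hpe] at hadj
        exact hadj
      · rintro ⟨i, h1, h2⟩
        refine hbad ⟨i, ?_⟩
        intro v hv
        rw [← hpe] at hv
        have hv' : v ∈ s(e.out.1, e.out.2) := by exact hv
        rcases Sym2.mem_iff.mp hv' with h | h
        · rwa [h]
        · rwa [h]
    · intro e1 _ e2 _ h
      rw [← Quot.out_eq e1, ← Quot.out_eq e2]
      exact congrArg (Quot.mk _) h
  have hcardV : (Finset.univ : Finset V).card = Fintype.card V := Finset.card_univ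
  rw [hcardV] at hb
  calc ((G.edgeFinset.filter fun e => ¬ ∃ i, ∀ v ∈ e, v ∈ A i).card : ℝ)
      ≤ ((badPairs G A Finset.univ).card : ℝ) := by exact_mod_cast hinj
    _ ≤ 2 * α * (Fintype.card V) * Real.log (Fintype.card V) / Real.log 2 := hb
    _ = 2 / Real.log 2 * Real.log (Fintype.card V) * α * (Fintype.card V) := by
        field_simp
end

section
/- There exists a universal constant c > 0 such that the following holds. Let G = (V,E) be a finite simple graph on n ≥ 2 vertices, let α > 0 and let m, M ≥ 1. Then at least one of the following two alternatives holds: (i) there exist pairwise disjoint subsets H₁,…,H_t ⊆ V with |H_j| ≥ m for every j, with Σ_j |H_j| ≥ M, and such that every induced subgraph G[H_j] is an α-expander; or (ii) there exists a subset S ⊆ V with |S| ≤ M + 2c·log(n)·α·n such that V∖S can be partitioned into sets {A_i}_i with |A_i| < 3m for every i and with no edge of G joining two different parts A_i, A_j (i ≠ j). -/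
open scoped Classical

/-- set of ordered cut pairs in the ambient graph -/
noncomputable def cutPairs {V : Type} [Fintype V] (G : SimpleGraph V) (S T : Finset V) :
    Finset (V × V) :=
  Finset.univ.filter fun p : V × V => p.1 ∈ S ∧ p.2 ∈ T ∧ G.Adj p.1 p.2

lemma cutEdges_induce_eq {V : Type} [Fintype V] (G : SimpleGraph V) (U : Finset V)
    (S' : Finset ↥(↑U : Set V)) :
    cutEdges (G.induce (↑U : Set V)) S' =
      (cutPairs G (S'.image Subtype.val) (U \ S'.image Subtype.val)).card := by
  unfold cutEdges cutPairs
  apply Finset.card_bij (fun p _ => ((p.1 : V), (p.2 : V)))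
  · rintro ⟨x, y⟩ hp
    simp only [Finset.mem_filter, Finset.mem_univ, true_and] at hp ⊢
    obtain ⟨h1, h2, h3⟩ := hp
    refine ⟨Finset.mem_image_of_mem _ h1, ?_, h3⟩
    refine Finset.mem_sdiff.mpr ⟨by simpa using y.2, fun hc => h2 ?_⟩
    obtain ⟨z, hz, hzy⟩ := Finset.mem_image.mp hc
    rwa [Subtype.val_injective hzy] at hz
  · rintro ⟨x, y⟩ hp ⟨x', y'⟩ hp' h
    simp only [Prod.mk.injEq] at h
    ext <;> simp [Subtype.val_injective h.1, Subtype.val_injective h.2, h.1, h.2]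
  · rintro ⟨u, v⟩ hq
    simp only [Finset.mem_filter, Finset.mem_univ, true_and] at hq
    obtain ⟨h1, h2, h3⟩ := hq
    obtain ⟨x, hx, hxu⟩ := Finset.mem_image.mp h1
    have hvU : v ∈ U := (Finset.mem_sdiff.mp h2).1
    refine ⟨(x, ⟨v, by simpa using hvU⟩), ?_, by simp [hxu]⟩
    simp only [Finset.mem_filter, Finset.mem_univ, true_and]
    refine ⟨hx, fun hc => (Finset.mem_sdiff.mp h2).2 ?_, ?_⟩
    · exact Finset.mem_image.mpr ⟨_, hc, rfl⟩
    · show G.Adj ((x : V)) v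
      rwa [hxu]

noncomputable def auxL2 (x : ℕ) : ℝ := Real.log x / Real.log 2

lemma auxLog_nonneg (x : ℕ) : 0 ≤ Real.log x := by
  rcases Nat.eq_zero_or_pos x with h | h
  · simp [h]
  · exact Real.log_nonneg (by exact_mod_cast h)

lemma auxL2_nonneg (x : ℕ) : 0 ≤ auxL2 x :=
  div_nonneg (auxLog_nonneg x) (Real.log_nonneg one_le_two)

lemma auxLog_mono {a b : ℕ} (h : a ≤ b) : Real.log a ≤ Real.log b := by
  rcases Nat.eq_zero_or_pos a with h0 | h0
  · simpa [h0] using auxLog_nonneg b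
  · exact Real.log_le_log (by exact_mod_cast h0) (by exact_mod_cast h)

lemma auxL2_mono {a b : ℕ} (h : a ≤ b) : auxL2 a ≤ auxL2 b :=
  div_le_div_of_nonneg_right (auxLog_mono h) (Real.log_pos one_lt_two).le

lemma auxL2_helper {a b : ℕ} (ha : 1 ≤ a) (hab : a ≤ b) :
    (a : ℝ) * auxL2 a + (b : ℝ) * auxL2 b + (a : ℝ) ≤ ((a : ℝ) + (b : ℝ)) * auxL2 (a + b) := by
  have h2 : (0:ℝ) < Real.log 2 := Real.log_pos one_lt_two
  have hapos : (0:ℝ) < a := by exact_mod_cast ha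
  have hkey : Real.log a + Real.log 2 ≤ Real.log (a + b : ℕ) := by
    rw [← Real.log_mul (ne_of_gt hapos) (by norm_num)]
    apply Real.log_le_log (by positivity)
    push_cast
    have : (a:ℝ) ≤ b := by exact_mod_cast hab
    nlinarith
  have hLa : auxL2 a + 1 ≤ auxL2 (a + b) := by
    unfold auxL2
    rw [div_add' _ _ _ (ne_of_gt h2)]
    exact div_le_div_of_nonneg_right (by linarith) h2.le
  have hLb : auxL2 b ≤ auxL2 (a + b) := auxL2_mono (Nat.le_add_left b a)
  have hbpos : (0:ℝ) ≤ b := by positivity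
  have h1 : (a:ℝ) * (auxL2 a + 1) ≤ (a:ℝ) * auxL2 (a+b) :=
    mul_le_mul_of_nonneg_left hLa (le_of_lt hapos)
  have h2' : (b:ℝ) * auxL2 b ≤ (b:ℝ) * auxL2 (a+b) :=
    mul_le_mul_of_nonneg_left hLb hbpos
  nlinarith

lemma auxL2_key {a b : ℕ} (ha : 1 ≤ a) (hb : 1 ≤ b) :
    (a : ℝ) * auxL2 a + (b : ℝ) * auxL2 b + min (a : ℝ) (b : ℝ)
      ≤ ((a + b : ℕ) : ℝ) * auxL2 (a + b) := by
  push_cast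
  rcases le_total a b with hab | hab
  · rw [min_eq_left (by exact_mod_cast hab)]
    exact auxL2_helper ha hab
  · rw [min_eq_right (by exact_mod_cast hab)]
    have := auxL2_helper hb hab
    rw [Nat.add_comm b a] at this
    push_cast at this
    linarith

lemma partition_lemma {V : Type} [Fintype V] (G : SimpleGraph V) (α : ℝ) (hα : 0 < α)
    (m : ℕ) (hm : 1 ≤ m) :
    ∀ U : Finset V,
      (∀ W : Finset V, W ⊆ U → m ≤ W.card → ¬ IsExpander (G.induce (↑W : Set V)) α) →
      ∃ (P : Finset (Finset V)) (B : Finset V),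
        (∀ A ∈ P, A ⊆ U ∧ A.card < m) ∧
        ((P : Set (Finset V)).Pairwise Disjoint) ∧
        P.sup id = U ∧
        ((B.card : ℝ) ≤ α * U.card * auxL2 U.card) ∧
        (∀ A ∈ P, ∀ A' ∈ P, A ≠ A' → ∀ u ∈ A, ∀ v ∈ A', G.Adj u v → u ∈ B ∨ v ∈ B) := by
  intro U
  induction U using Finset.strongInduction with
  | _ U IH =>
  intro hno
  by_cases hsmall : U.card < m
  · refine ⟨{U}, ∅, ?_, ?_, ?_, ?_, ?_⟩
    · intro A hA
      rw [Finset.mem_singleton] at hA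
      subst hA; exact ⟨subset_rfl, hsmall⟩
    · simp
    · simp
    · simpa using mul_nonneg (mul_nonneg hα.le (Nat.cast_nonneg _)) (auxL2_nonneg _)
    · intro A hA A' hA' hne
      rw [Finset.mem_singleton] at hA hA'
      subst hA; subst hA'; exact absurd rfl hne
  · push_neg at hsmall
    have hnotexp := hno U subset_rfl hsmall
    rw [IsExpander] at hnotexp
    push_neg at hnotexp
    obtain ⟨S', hne, hnuniv, hcut⟩ := hnotexp
    set S₁ : Finset V := S'.image Subtype.val with hS₁def
    set S₂ : Finset V := U \ S₁ with hS₂def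
    have hS₁sub : S₁ ⊆ U := by
      intro x hx
      obtain ⟨y, _, rfl⟩ := Finset.mem_image.mp hx
      simpa using y.2
    have hS₁card : S₁.card = S'.card := Finset.card_image_of_injective _ Subtype.val_injective
    have hS₁ne : S₁.Nonempty := hne.image _
    have hS₂ne : S₂.Nonempty := by
      obtain ⟨y, hy⟩ : ∃ y : ↥(↑U : Set V), y ∉ S' := by
        by_contra hc
        push_neg at hc
        exact hnuniv (Finset.eq_univ_iff_forall.mpr hc)
      refine ⟨(y : V), Finset.mem_sdiff.mpr ⟨by simpa using y.2, fun hc => hy ?_⟩⟩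
      obtain ⟨z, hz, hzy⟩ := Finset.mem_image.mp hc
      rwa [Subtype.val_injective hzy] at hz
    have hcardle : S₁.card ≤ U.card := Finset.card_le_card hS₁sub
    have hcards : S₁.card + S₂.card = U.card := by
      rw [hS₂def, Finset.card_sdiff_of_subset hS₁sub]; omega
    have hS₂card : S₂.card = U.card - S₁.card := by rw [hS₂def, Finset.card_sdiff_of_subset hS₁sub]
    have hS₁lt : S₁ ⊂ U := by
      refine Finset.ssubset_iff_of_subset hS₁sub |>.mpr ?_
      obtain ⟨x, hx⟩ := hS₂ne
      exact ⟨x, (Finset.mem_sdiff.mp hx).1, (Finset.mem_sdiff.mp hx).2⟩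
    have hS₂lt : S₂ ⊂ U := by
      refine Finset.ssubset_iff_of_subset (Finset.sdiff_subset) |>.mpr ?_
      obtain ⟨x, hx⟩ := hS₁ne
      exact ⟨x, hS₁sub hx, fun hc => (Finset.mem_sdiff.mp hc).2 hx⟩
    obtain ⟨P₁, B₁, hP₁mem, hP₁pair, hP₁sup, hB₁, hP₁edge⟩ :=
      IH S₁ hS₁lt (fun W hW => hno W (hW.trans hS₁sub))
    obtain ⟨P₂, B₂, hP₂mem, hP₂pair, hP₂sup, hB₂, hP₂edge⟩ :=
      IH S₂ hS₂lt (fun W hW => hno W (hW.trans Finset.sdiff_subset))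
    set Bc : Finset V := (cutPairs G S₁ S₂).image Prod.fst with hBcdef
    have hBc_mem : ∀ u ∈ S₁, ∀ v ∈ S₂, G.Adj u v → u ∈ Bc := by
      intro u hu v hv hadj
      refine Finset.mem_image.mpr ⟨(u, v), ?_, rfl⟩
      simp only [cutPairs, Finset.mem_filter, Finset.mem_univ, true_and]
      exact ⟨hu, hv, hadj⟩
    have hBc_card : (Bc.card : ℝ) < α * min (S₁.card : ℝ) (S₂.card : ℝ) := by
      have h1 : Bc.card ≤ (cutPairs G S₁ S₂).card := Finset.card_image_le
      have hUcard : Fintype.card ↥(↑U : Set V) = U.card := Fintype.card_coe U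
      rw [cutEdges_induce_eq] at hcut
      rw [← hS₁def, ← hS₂def] at hcut
      simp only [Finset.card_compl] at hcut
      rw [hUcard, ← hS₁card, ← hS₂card] at hcut
      calc (Bc.card : ℝ) ≤ ((cutPairs G S₁ S₂).card : ℝ) := by exact_mod_cast h1
        _ < _ := hcut
    refine ⟨P₁ ∪ P₂, B₁ ∪ B₂ ∪ Bc, ?_, ?_, ?_, ?_, ?_⟩
    · intro A hA
      rcases Finset.mem_union.mp hA with h | h
      · exact ⟨(hP₁mem A h).1.trans hS₁sub, (hP₁mem A h).2⟩
      · exact ⟨(hP₂mem A h).1.trans Finset.sdiff_subset, (hP₂mem A h).2⟩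
    · intro A hA A' hA' hne
      rw [Finset.mem_coe, Finset.mem_union] at hA hA'
      have hdisj12 : Disjoint S₁ S₂ := Finset.disjoint_sdiff
      rcases hA with h | h <;> rcases hA' with h' | h'
      · exact hP₁pair h h' hne
      · exact hdisj12.mono (hP₁mem A h).1 (hP₂mem A' h').1
      · exact (hdisj12.mono (hP₁mem A' h').1 (hP₂mem A h).1).symm
      · exact hP₂pair h h' hne
    · rw [Finset.sup_union, hP₁sup, hP₂sup]
      exact Finset.union_sdiff_of_subset hS₁sub
    · have hcard_le : ((B₁ ∪ B₂ ∪ Bc).card : ℝ) ≤ (B₁.card : ℝ) + B₂.card + Bc.card := by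
        have := (Finset.card_union_le (B₁ ∪ B₂) Bc).trans
          (Nat.add_le_add_right (Finset.card_union_le B₁ B₂) _)
        exact_mod_cast this
      have hkey := auxL2_key (Nat.one_le_iff_ne_zero.mpr
          (Finset.card_ne_zero_of_mem hS₁ne.choose_spec))
          (Nat.one_le_iff_ne_zero.mpr (Finset.card_ne_zero_of_mem hS₂ne.choose_spec))
      rw [hcards] at hkey
      have hmul := mul_le_mul_of_nonneg_left hkey hα.le
      calc ((B₁ ∪ B₂ ∪ Bc).card : ℝ) ≤ (B₁.card : ℝ) + B₂.card + Bc.card := hcard_le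
        _ ≤ α * S₁.card * auxL2 S₁.card + α * S₂.card * auxL2 S₂.card
            + α * min (S₁.card : ℝ) (S₂.card : ℝ) := by
          have := hBc_card.le
          linarith [hB₁, hB₂]
        _ ≤ α * U.card * auxL2 U.card := by
          nlinarith [hmul]
    · intro A hA A' hA' hne u hu v hv hadj
      rw [Finset.mem_union] at hA hA'
      rcases hA with h | h <;> rcases hA' with h' | h'
      · rcases hP₁edge A h A' h' hne u hu v hv hadj with h | h
        · exact Or.inl (Finset.mem_union.mpr (Or.inl (Finset.mem_union.mpr (Or.inl h))))
        · exact Or.inr (Finset.mem_union.mpr (Or.inl (Finset.mem_union.mpr (Or.inl h))))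
      · exact Or.inl (Finset.mem_union.mpr (Or.inr
          (hBc_mem u ((hP₁mem A h).1 hu) v ((hP₂mem A' h').1 hv) hadj)))
      · exact Or.inr (Finset.mem_union.mpr (Or.inr
          (hBc_mem v ((hP₁mem A' h').1 hv) u ((hP₂mem A h).1 hu) hadj.symm)))
      · rcases hP₂edge A h A' h' hne u hu v hv hadj with h | h
        · exact Or.inl (Finset.mem_union.mpr (Or.inl (Finset.mem_union.mpr (Or.inr h))))
        · exact Or.inr (Finset.mem_union.mpr (Or.inl (Finset.mem_union.mpr (Or.inr h))))

lemma greedy_family {V : Type} [Fintype V] (G : SimpleGraph V) (α : ℝ) (m : ℕ) (hm : 1 ≤ m) :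
    ∀ U : Finset V, ∃ F : Finset (Finset V),
      (∀ W ∈ F, W ⊆ U ∧ m ≤ W.card ∧ IsExpander (G.induce (↑W : Set V)) α) ∧
      ((F : Set (Finset V)).Pairwise Disjoint) ∧
      (F.sup id ⊆ U) ∧
      ((F.sup id).card = ∑ W ∈ F, W.card) ∧
      (∀ W : Finset V, W ⊆ U \ F.sup id → m ≤ W.card →
        ¬ IsExpander (G.induce (↑W : Set V)) α) := by
  intro U
  induction U using Finset.strongInduction with
  | _ U IH =>
  by_cases hex : ∃ W : Finset V, W ⊆ U ∧ m ≤ W.card ∧ IsExpander (G.induce (↑W : Set V)) α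
  · obtain ⟨W, hWU, hWm, hWexp⟩ := hex
    have hWne : W.Nonempty := Finset.card_pos.mp (lt_of_lt_of_le hm hWm)
    have hlt : U \ W ⊂ U := by
      obtain ⟨x, hx⟩ := hWne
      refine Finset.ssubset_iff_of_subset Finset.sdiff_subset |>.mpr
        ⟨x, hWU hx, fun hc => (Finset.mem_sdiff.mp hc).2 hx⟩
    obtain ⟨F', hF'mem, hF'pair, hF'sup, hF'card, hF'max⟩ := IH (U \ W) hlt
    have hWnotin : W ∉ F' := by
      intro hc
      obtain ⟨x, hx⟩ := hWne
      exact (Finset.mem_sdiff.mp ((hF'mem W hc).1 hx)).2 hx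
    have hdisjW : ∀ X ∈ F', Disjoint W X := by
      intro X hX
      exact Finset.disjoint_sdiff.mono_right (hF'mem X hX).1
    refine ⟨insert W F', ?_, ?_, ?_, ?_, ?_⟩
    · intro X hX
      rcases Finset.mem_insert.mp hX with rfl | hX
      · exact ⟨hWU, hWm, hWexp⟩
      · exact ⟨(hF'mem X hX).1.trans Finset.sdiff_subset, (hF'mem X hX).2⟩
    · rw [Finset.coe_insert]
      rw [Set.pairwise_insert_of_symmetric]
      exact ⟨hF'pair, fun X hX _ => hdisjW X hX⟩
    · rw [Finset.sup_insert]
      exact Finset.union_subset hWU (hF'sup.trans Finset.sdiff_subset)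
    · rw [Finset.sup_insert, Finset.sum_insert hWnotin, ← hF'card]
      exact Finset.card_union_of_disjoint (Finset.disjoint_sdiff.mono_right hF'sup)
    · intro X hX hXm
      apply hF'max X _ hXm
      intro x hx
      have hmem := hX hx
      simp only [Finset.sup_insert, id_eq, Finset.sup_eq_union, Finset.mem_sdiff,
        Finset.mem_union, not_or] at hmem
      simp only [Finset.mem_sdiff]
      exact ⟨⟨hmem.1, hmem.2.1⟩, hmem.2.2⟩
  · refine ⟨∅, by simp, by simp, by simp, by simp, ?_⟩
    push_neg at hex
    intro X hX hXm
    exact hex X (by simpa using hX) hXm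


/-- **Many disjoint expanding subgraphs or a good partition** (Corollary
`comb-partitioning`). There is a universal constant `c > 0` such that for every
graph `G` on `n ≥ 2` vertices, `α > 0` and `m, M ≥ 1`, either (i) there are
pairwise disjoint subsets `H_j` of size `≥ m` with total size `≥ M`, each inducing
an `α`-expander; or (ii) there is a set `S` with `|S| ≤ M + 2c·log(n)·α·n` such
that `V ∖ S` can be partitioned into parts of size `< 3m` with no edge of `G`
joining two different parts. -/
theorem expanders_or_partition : ∃ c : ℝ, 0 < c ∧
    ∀ (V : Type) [Fintype V], ∀ (G : SimpleGraph V) (α : ℝ) (m M : ℕ),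
      2 ≤ Fintype.card V → 0 < α → 1 ≤ m → 1 ≤ M →
      (∃ (t : ℕ) (H : Fin t → Finset V),
        (∀ j j', j ≠ j' → Disjoint (H j) (H j')) ∧
        (∀ j, m ≤ (H j).card) ∧
        (M ≤ ∑ j, (H j).card) ∧
        (∀ j, IsExpander (G.induce (↑(H j) : Set V)) α)) ∨
      (∃ S : Finset V,
        ((S.card : ℝ) ≤ (M : ℝ) + 2 * c * Real.log (Fintype.card V) * α * (Fintype.card V)) ∧
        ∃ (t : ℕ) (A : Fin t → Finset V),
          (∀ i, ∀ v ∈ A i, v ∉ S) ∧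
          (∀ v : V, v ∉ S → ∃! i, v ∈ A i) ∧
          (∀ i, (A i).card < 3 * m) ∧
          (∀ i j, i ≠ j → ∀ u ∈ A i, ∀ v ∈ A j, ¬ G.Adj u v)) := by
  refine ⟨1, one_pos, ?_⟩
  intro V _ G α m M hn hα hm hM
  obtain ⟨F, hFmem, hFpair, _, hFcard, hFmax⟩ := greedy_family G α m hm Finset.univ
  by_cases htot : M ≤ ∑ W ∈ F, W.card
  · left
    refine ⟨F.card, fun j => (F.equivFin.symm j : Finset V), ?_, ?_, ?_, ?_⟩
    · intro j j' hne
      have hne' : ((F.equivFin.symm j : Finset V)) ≠ ((F.equivFin.symm j' : Finset V)) := by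
        intro hc
        apply hne
        have : F.equivFin.symm j = F.equivFin.symm j' := Subtype.ext hc
        simpa using congrArg F.equivFin this
      exact hFpair (Finset.mem_coe.mpr (F.equivFin.symm j).2)
        (Finset.mem_coe.mpr (F.equivFin.symm j').2) hne'
    · exact fun j => (hFmem _ (F.equivFin.symm j).2).2.1
    · calc M ≤ ∑ W ∈ F, W.card := htot
        _ = ∑ x : ↥F, (x : Finset V).card := (Finset.sum_coe_sort F _).symm
        _ = ∑ j, ((F.equivFin.symm j : Finset V)).card :=
          (Equiv.sum_comp F.equivFin.symm (fun x : ↥F => (x : Finset V).card)).symm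
    · exact fun j => (hFmem _ (F.equivFin.symm j).2).2.2
  · right
    push_neg at htot
    set U₀ : Finset V := Finset.univ \ F.sup id with hU₀
    obtain ⟨P, B, hPmem, hPpair, hPsup, hB, hPedge⟩ :=
      partition_lemma G α hα m hm U₀ (fun W hW => hFmax W hW)
    set S : Finset V := F.sup id ∪ B with hSdef
    have hBS : B ⊆ S := Finset.subset_union_right
    refine ⟨S, ?_, P.card, fun i => (P.equivFin.symm i : Finset V) \ S, ?_, ?_, ?_, ?_⟩
    · -- cardinality bound
      have hlog2 : (0.6931471803 : ℝ) < Real.log 2 := Real.log_two_gt_d9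
      have hun : U₀.card ≤ Fintype.card V := by
        simpa using Finset.card_le_univ U₀
      have hunR : (U₀.card : ℝ) ≤ (Fintype.card V : ℝ) := by exact_mod_cast hun
      have hL : auxL2 U₀.card ≤ 2 * Real.log (Fintype.card V) := by
        have h1 : Real.log U₀.card ≤ Real.log (Fintype.card V) := auxLog_mono hun
        have h2 : auxL2 U₀.card ≤ 2 * Real.log U₀.card := by
          rw [auxL2, div_le_iff₀ (Real.log_pos one_lt_two)]
          nlinarith [auxLog_nonneg U₀.card]
        linarith
      have hprod : α * U₀.card * auxL2 U₀.card
          ≤ 2 * 1 * Real.log (Fintype.card V) * α * (Fintype.card V) := by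
        have hlogn : (0:ℝ) ≤ Real.log (Fintype.card V) := auxLog_nonneg _
        have s1 : α * U₀.card * auxL2 U₀.card
            ≤ α * U₀.card * (2 * Real.log (Fintype.card V)) :=
          mul_le_mul_of_nonneg_left hL (by positivity)
        have s2 : α * (U₀.card : ℝ) ≤ α * (Fintype.card V : ℝ) :=
          mul_le_mul_of_nonneg_left hunR hα.le
        have s3 : α * (U₀.card : ℝ) * (2 * Real.log (Fintype.card V))
            ≤ α * (Fintype.card V : ℝ) * (2 * Real.log (Fintype.card V)) :=
          mul_le_mul_of_nonneg_right s2 (by positivity)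
        nlinarith [s1, s3]
      have hsc : (S.card : ℝ) ≤ ((F.sup id).card : ℝ) + B.card := by
        exact_mod_cast Finset.card_union_le _ _
      have hsup_le : ((F.sup id).card : ℝ) ≤ M := by
        rw [hFcard]
        exact_mod_cast htot.le
      linarith
    · intro i v hv
      exact (Finset.mem_sdiff.mp hv).2
    · intro v hv
      have hvU : v ∈ U₀ := by
        rw [hU₀, Finset.mem_sdiff]
        exact ⟨Finset.mem_univ v, fun hc => hv (Finset.mem_union.mpr (Or.inl hc))⟩
      rw [← hPsup, Finset.mem_sup] at hvU
      obtain ⟨Ap, hAp, hvAp⟩ := hvU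
      rw [id_eq] at hvAp
      refine ⟨P.equivFin ⟨Ap, hAp⟩, ?_, ?_⟩
      · simp only [Equiv.symm_apply_apply]
        exact Finset.mem_sdiff.mpr ⟨hvAp, hv⟩
      · intro j hj
        have hvj : v ∈ (P.equivFin.symm j : Finset V) := (Finset.mem_sdiff.mp hj).1
        have heq : ((P.equivFin.symm j : Finset V)) = Ap := by
          by_contra hne
          exact (Finset.disjoint_left.mp
            (hPpair (Finset.mem_coe.mpr (P.equivFin.symm j).2)
              (Finset.mem_coe.mpr hAp) hne) hvj) hvAp
        have hsub : P.equivFin.symm j = ⟨Ap, hAp⟩ := Subtype.ext heq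
        calc j = P.equivFin (P.equivFin.symm j) := (Equiv.apply_symm_apply _ _).symm
          _ = P.equivFin ⟨Ap, hAp⟩ := by rw [hsub]
    · intro i
      show ((P.equivFin.symm i : Finset V) \ S).card < 3 * m
      have h1 : ((P.equivFin.symm i : Finset V) \ S).card ≤ (P.equivFin.symm i : Finset V).card :=
        Finset.card_le_card Finset.sdiff_subset
      have h2 : (P.equivFin.symm i : Finset V).card < m :=
        (hPmem _ (P.equivFin.symm i).2).2
      omega
    · intro i j hij u hu v hv hadj
      have hune : ((P.equivFin.symm i : Finset V)) ≠ ((P.equivFin.symm j : Finset V)) := by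
        intro hc
        apply hij
        have : P.equivFin.symm i = P.equivFin.symm j := Subtype.ext hc
        simpa using congrArg P.equivFin this
      rcases hPedge _ (P.equivFin.symm i).2 _ (P.equivFin.symm j).2 hune
          u (Finset.mem_sdiff.mp hu).1 v (Finset.mem_sdiff.mp hv).1 hadj with h | h
      · exact (Finset.mem_sdiff.mp hu).2 (hBS h)
      · exact (Finset.mem_sdiff.mp hv).2 (hBS h)
end

section
/- There exists a universal constant c > 0 such that the following holds. Let G = (V,E) be a finite simple graph on n ≥ 2 vertices, and let a subsystem code on n qubits with k logical qubits and dressed distance d be local on G in the sense that its qubits are in bijection with V and every gauge check of weight at least 2 is supported on a set of pairwise adjacent vertices of G. Then there exist pairwise disjoint subsets H₁,…,H_t ⊆ V such that |H_j| ≥ d/3 for every j, Σ_j |H_j| ≥ k/2, and every induced subgraph G[H_j] is an α-expander with α = k/(4c·log(n)·n). -/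
open scoped Classical

namespace LCFE

open Module

variable {n : ℕ}

lemma sympForm_comm (v w : PauliVec n) : sympForm v w = sympForm w v :=
  Finset.sum_congr rfl fun i _ => by ring

lemma sympForm_add_right (a w₁ w₂ : PauliVec n) :
    sympForm a (w₁ + w₂) = sympForm a w₁ + sympForm a w₂ := by
  rw [sympForm_comm, sympForm_add_left, sympForm_comm w₁, sympForm_comm w₂]

lemma sympForm_smul_right (c : ZMod 2) (a w : PauliVec n) :
    sympForm a (c • w) = c * sympForm a w := by
  rw [sympForm_comm, sympForm_smul_left, sympForm_comm]

/-- The submodule of vectors w with `sympForm x w = 0`. -/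
def rightKernel (x : PauliVec n) : Submodule (ZMod 2) (PauliVec n) where
  carrier := {w | sympForm x w = 0}
  zero_mem' := by
    have : (0 : PauliVec n) = (0 : ZMod 2) • (0 : PauliVec n) := by simp
    show sympForm x 0 = 0
    rw [this, sympForm_smul_right, zero_mul]
  add_mem' := by
    intro a b ha hb
    show sympForm x (a + b) = 0
    rw [sympForm_add_right, ha, hb, add_zero]
  smul_mem' := by
    intro c w hw
    show sympForm x (c • w) = 0
    rw [sympForm_smul_right, hw, mul_zero]

lemma mem_sympCompl_span {S : Set (PauliVec n)} {x : PauliVec n}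
    (h : ∀ s ∈ S, sympForm x s = 0) : x ∈ sympCompl (Submodule.span (ZMod 2) S) := by
  intro w hw
  have hle : Submodule.span (ZMod 2) S ≤ rightKernel x := Submodule.span_le.2 h
  exact hle hw

/-- Restriction of a Pauli vector to a set of qubits. -/
def restrictL (B : Finset (Fin n)) : PauliVec n →ₗ[ZMod 2] PauliVec n where
  toFun v := (fun i => if i ∈ B then v.1 i else 0, fun i => if i ∈ B then v.2 i else 0)
  map_add' a b := by
    refine Prod.ext ?_ ?_ <;> funext i <;> simp only [Prod.fst_add, Prod.snd_add,
      Pi.add_apply] <;> split <;> simp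
  map_smul' c a := by
    refine Prod.ext ?_ ?_ <;> funext i <;> simp only [Prod.smul_fst, Prod.smul_snd,
      Pi.smul_apply, smul_eq_mul, RingHom.id_apply] <;> split <;> simp

/-- Pauli vectors supported inside `B`. -/
def suppIn (B : Finset (Fin n)) : Submodule (ZMod 2) (PauliVec n) where
  carrier := {v | ∀ i, i ∉ B → v.1 i = 0 ∧ v.2 i = 0}
  zero_mem' := fun i _ => ⟨rfl, rfl⟩
  add_mem' := by
    intro a b ha hb i hi
    have h1 := ha i hi; have h2 := hb i hi
    constructor <;> simp [Prod.fst_add, Prod.snd_add, h1.1, h1.2, h2.1, h2.2]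
  smul_mem' := by
    intro c v hv i hi
    have h := hv i hi
    constructor <;> simp [Prod.smul_fst, Prod.smul_snd, h.1, h.2]

lemma mem_suppIn {B : Finset (Fin n)} {v : PauliVec n} :
    v ∈ suppIn B ↔ ∀ i, i ∉ B → v.1 i = 0 ∧ v.2 i = 0 := Iff.rfl

lemma restrictL_mem_suppIn (B : Finset (Fin n)) (v : PauliVec n) :
    restrictL B v ∈ suppIn B := by
  intro i hi
  constructor <;> simp [restrictL, hi]

lemma restrictL_eq_self {B : Finset (Fin n)} {v : PauliVec n} (hv : v ∈ suppIn B) :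
    restrictL B v = v := by
  refine Prod.ext ?_ ?_ <;> funext i <;>
    simp only [restrictL, LinearMap.coe_mk, AddHom.coe_mk] <;> split
  · rfl
  · next h => exact ((hv i h).1).symm
  · rfl
  · next h => exact ((hv i h).2).symm

lemma sympForm_restrictL_right {B : Finset (Fin n)} {v : PauliVec n}
    (hv : v ∈ suppIn B) (w : PauliVec n) :
    sympForm v (restrictL B w) = sympForm v w := by
  refine Finset.sum_congr rfl fun i _ => ?_
  by_cases h : i ∈ B
  · simp [restrictL, h]
  · rcases hv i h with ⟨h1, h2⟩
    simp [restrictL, h, h1, h2]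

lemma sympForm_eq_zero_of_disj {v w : PauliVec n}
    (h : ∀ i, (v.1 i = 0 ∧ v.2 i = 0) ∨ (w.1 i = 0 ∧ w.2 i = 0)) :
    sympForm v w = 0 := by
  refine Finset.sum_eq_zero fun i _ => ?_
  rcases h i with ⟨h1, h2⟩ | ⟨h1, h2⟩ <;> simp [h1, h2]

lemma pauliWeight_le_of_suppIn {B : Finset (Fin n)} {v : PauliVec n}
    (hv : v ∈ suppIn B) : PauliWeight v ≤ B.card := by
  refine Finset.card_le_card fun i hi => ?_
  rw [PauliSupport, Finset.mem_filter] at hi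
  by_contra hiB
  rcases hv i hiB with ⟨h1, h2⟩
  rcases hi.2 with h | h <;> [exact h h1; exact h h2]

end LCFE
namespace LCFE

open Module

variable {n : ℕ}

/-- Single-qubit X operator. -/
def exX (q : Fin n) : PauliVec n := (Pi.single q 1, 0)
/-- Single-qubit Z operator. -/
def exZ (q : Fin n) : PauliVec n := (0, Pi.single q 1)

lemma sympForm_exX (v : PauliVec n) (q : Fin n) : sympForm v (exX q) = v.2 q := by
  unfold sympForm exX
  rw [Finset.sum_eq_single q]
  · simp
  · intro i _ hne
    simp [Pi.single_eq_of_ne hne]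
  · simp

lemma sympForm_exZ (v : PauliVec n) (q : Fin n) : sympForm v (exZ q) = v.1 q := by
  unfold sympForm exZ
  rw [Finset.sum_eq_single q]
  · simp
  · intro i _ hne
    simp [Pi.single_eq_of_ne hne]
  · simp

lemma exX_mem_suppIn {B : Finset (Fin n)} {q : Fin n} (hq : q ∈ B) : exX q ∈ suppIn B := by
  intro i hi
  have : i ≠ q := fun h => hi (h ▸ hq)
  constructor <;> simp [exX, Pi.single_eq_of_ne this]

lemma exZ_mem_suppIn {B : Finset (Fin n)} {q : Fin n} (hq : q ∈ B) : exZ q ∈ suppIn B := by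
  intro i hi
  have : i ≠ q := fun h => hi (h ▸ hq)
  constructor <;> simp [exZ, Pi.single_eq_of_ne this]

lemma suppIn_nondeg {B : Finset (Fin n)} {u : PauliVec n} (hu : u ∈ suppIn B)
    (h : ∀ w ∈ suppIn B, sympForm u w = 0) : u = 0 := by
  refine Prod.ext ?_ ?_ <;> funext i
  · by_cases hi : i ∈ B
    · have := h (exZ i) (exZ_mem_suppIn hi)
      rwa [sympForm_exZ] at this
    · exact (hu i hi).1
  · by_cases hi : i ∈ B
    · have := h (exX i) (exX_mem_suppIn hi)
      rwa [sympForm_exX] at this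
    · exact (hu i hi).2

/-- The map to the dual of `suppIn B` induced by the symplectic form. -/
noncomputable def toDualMap (B : Finset (Fin n)) :
    ↥(suppIn B) →ₗ[ZMod 2] Module.Dual (ZMod 2) ↥(suppIn B) where
  toFun u :=
    { toFun := fun w => sympForm u.1 w.1
      map_add' := fun a b => by
        simp only [Submodule.coe_add]; exact sympForm_add_right _ _ _
      map_smul' := fun c a => by
        simp only [SetLike.val_smul, RingHom.id_apply, smul_eq_mul]
        exact sympForm_smul_right _ _ _ }
  map_add' a b := by
    ext w
    simp only [Submodule.coe_add, LinearMap.coe_mk, AddHom.coe_mk, LinearMap.add_apply]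
    exact sympForm_add_left _ _ _
  map_smul' c a := by
    ext w
    simp only [SetLike.val_smul, LinearMap.coe_mk, AddHom.coe_mk, RingHom.id_apply,
      LinearMap.smul_apply, smul_eq_mul]
    exact sympForm_smul_left _ _ _

lemma toDualMap_surjective (B : Finset (Fin n)) : Function.Surjective (toDualMap B) := by
  have hinj : Function.Injective (toDualMap B) := by
    rw [← LinearMap.ker_eq_bot, Submodule.eq_bot_iff]
    intro u hu
    have : ∀ w ∈ suppIn B, sympForm u.1 w = 0 := by
      intro w hw
      have := LinearMap.congr_fun (LinearMap.mem_ker.1 hu) ⟨w, hw⟩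
      simpa [toDualMap] using this
    exact Subtype.ext (suppIn_nondeg u.2 this)
  exact (LinearMap.injective_iff_surjective_of_finrank_eq_finrank
    (Subspace.dual_finrank_eq).symm).1 hinj

/-- `suppIn B` is (linearly) equivalent to the product of two function spaces on `B`. -/
noncomputable def suppInEquiv (B : Finset (Fin n)) :
    ↥(suppIn B) ≃ₗ[ZMod 2] ((↥B → ZMod 2) × (↥B → ZMod 2)) where
  toFun u := (fun i => u.1.1 i.1, fun i => u.1.2 i.1)
  map_add' a b := by
    refine Prod.ext ?_ ?_ <;> funext i <;> simp
  map_smul' c a := by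
    refine Prod.ext ?_ ?_ <;> funext i <;> simp
  invFun p := ⟨((fun i => if h : i ∈ B then p.1 ⟨i, h⟩ else 0),
      (fun i => if h : i ∈ B then p.2 ⟨i, h⟩ else 0)), by
    intro i hi
    constructor <;> simp [hi]⟩
  left_inv u := by
    refine Subtype.ext (Prod.ext ?_ ?_) <;> funext i <;> simp only
    · split
      · rfl
      · next h => exact ((u.2 i h).1).symm
    · split
      · rfl
      · next h => exact ((u.2 i h).2).symm
  right_inv p := by
    refine Prod.ext ?_ ?_ <;> funext i <;> simp [i.2]

lemma finrank_suppIn (B : Finset (Fin n)) :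
    Module.finrank (ZMod 2) ↥(suppIn B) = 2 * B.card := by
  rw [(suppInEquiv B).finrank_eq, Module.finrank_prod,
    Module.finrank_fintype_fun_eq_card, Fintype.card_coe]
  ring

end LCFE
namespace LCFE

open Module

variable {n : ℕ}

lemma sympForm_eq_zero_of_star {r : ℕ} {g : Fin r → PauliVec n}
    {u v : PauliVec n} (hu : u ∈ gaugeGroup g) (hu' : u ∈ sympCompl (gaugeGroup g))
    (hv : v ∈ gaugeGroup g ⊔ sympCompl (gaugeGroup g)) : sympForm u v = 0 := by
  rcases Submodule.mem_sup.1 hv with ⟨a, ha, b, hb, rfl⟩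
  rw [sympForm_add_right, hu' a ha, sympForm_comm, hb u hu, add_zero]

/-- The cleaning lemma: if all elements of `G^⊥` supported in `A` belong to `G`,
then every dressed operator can be cleaned off `A` using a gauge element. -/
lemma cleaning {r : ℕ} (g : Fin r → PauliVec n) (A : Finset (Fin n))
    (hstar : ∀ u ∈ sympCompl (gaugeGroup g), u ∈ suppIn A → u ∈ gaugeGroup g) :
    gaugeGroup g ⊔ sympCompl (gaugeGroup g) ≤
      gaugeGroup g ⊔ ((gaugeGroup g ⊔ sympCompl (gaugeGroup g)) ⊓ suppIn Aᶜ) := by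
  intro v hv
  -- first show that the restriction of v to A is the restriction of a gauge element
  have key : restrictL A v ∈ (gaugeGroup g).map (restrictL A) := by
    by_contra hvA
    -- find a separating functional
    set X1 : Submodule (ZMod 2) ↥(suppIn A) :=
      ((gaugeGroup g).map (restrictL A)).comap (suppIn A).subtype with hX1
    have hy : (⟨restrictL A v, restrictL_mem_suppIn A v⟩ : ↥(suppIn A)) ∉ X1 := by
      intro hmem
      exact hvA (Submodule.mem_comap.1 hmem)
    obtain ⟨f, hf0, hfbot⟩ := Submodule.exists_dual_map_eq_bot_of_notMem hy inferInstance
    obtain ⟨u, hu⟩ := toDualMap_surjective A f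
    have huA : u.1 ∈ suppIn A := u.2
    have hform : ∀ w : ↥(suppIn A), sympForm u.1 w.1 = f w := fun w => by
      rw [← hu]; rfl
    -- u is orthogonal to the gauge group
    have huG : u.1 ∈ sympCompl (gaugeGroup g) := by
      intro w hw
      have h1 : sympForm u.1 (restrictL A w) = 0 := by
        have hmem : (⟨restrictL A w, restrictL_mem_suppIn A w⟩ : ↥(suppIn A)) ∈ X1 :=
          Submodule.mem_comap.2 (Submodule.mem_map_of_mem hw)
        have : f ⟨restrictL A w, restrictL_mem_suppIn A w⟩ = 0 := by
          have := hfbot ▸ Submodule.mem_map_of_mem (f := f) hmem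
          exact (Submodule.mem_bot _).1 this
        exact (hform ⟨restrictL A w, restrictL_mem_suppIn A w⟩).trans this
      rwa [sympForm_restrictL_right huA] at h1
    -- hence u is a gauge element supported on A, so a stabilizer-like element
    have huG' : u.1 ∈ gaugeGroup g := hstar u.1 huG huA
    -- so u is orthogonal to v
    have : sympForm u.1 v = 0 := sympForm_eq_zero_of_star huG' huG hv
    rw [← sympForm_restrictL_right huA] at this
    have : f ⟨restrictL A v, restrictL_mem_suppIn A v⟩ = 0 := by
      rw [← hform]; exact this
    exact hf0 this
  rcases Submodule.mem_map.1 key with ⟨h, hh, hhv⟩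
  refine Submodule.mem_sup.2 ⟨h, hh, v - h, ?_, by abel⟩
  refine Submodule.mem_inf.2 ⟨?_, ?_⟩
  · exact Submodule.sub_mem _ hv (Submodule.mem_sup_left hh)
  · intro i hi
    have hiA : i ∈ A := by simpa using hi
    have h1 : (restrictL A (v - h)) = restrictL A v - restrictL A h := by
      rw [map_sub]
    have h2 : restrictL A (v - h) = 0 := by
      rw [h1, hhv, sub_self]
    have h3 : (restrictL A (v - h)).1 i = (v - h).1 i ∧
        (restrictL A (v - h)).2 i = (v - h).2 i := by
      constructor <;> simp [restrictL, hiA]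
    rw [h2] at h3
    exact ⟨h3.1.symm, h3.2.symm⟩

/-- The counting consequence of the cleaning lemma. -/
lemma quant_count {r : ℕ} (g : Fin r → PauliVec n) (A : Finset (Fin n))
    (hstar : ∀ u ∈ sympCompl (gaugeGroup g), u ∈ suppIn A → u ∈ gaugeGroup g) :
    subsysLogicalQubits g + A.card ≤ n := by
  classical
  set Gg := gaugeGroup g
  set L := Gg ⊔ sympCompl Gg with hL
  have hclean : L ≤ Gg ⊔ (L ⊓ suppIn Aᶜ) := cleaning g A hstar
  have hrank1 : finrank (ZMod 2) ↥L + finrank (ZMod 2) ↥(Gg ⊓ sympCompl Gg) =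
      finrank (ZMod 2) ↥Gg + finrank (ZMod 2) ↥(sympCompl Gg) :=
    Submodule.finrank_sup_add_finrank_inf_eq _ _
  have hrank2 : finrank (ZMod 2) ↥L ≤
      finrank (ZMod 2) ↥Gg + finrank (ZMod 2) ↥(L ⊓ suppIn Aᶜ) := by
    have := Submodule.finrank_sup_add_finrank_inf_eq Gg (L ⊓ suppIn Aᶜ)
    have hmono := Submodule.finrank_mono hclean
    omega
  have hrank3 : finrank (ZMod 2) ↥(L ⊓ suppIn Aᶜ) ≤ 2 * (n - A.card) := by
    have h1 : finrank (ZMod 2) ↥(L ⊓ suppIn Aᶜ) ≤ finrank (ZMod 2) ↥(suppIn Aᶜ) :=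
      Submodule.finrank_mono inf_le_right
    rw [finrank_suppIn] at h1
    have : (Aᶜ : Finset (Fin n)).card = n - A.card := by
      rw [Finset.card_compl, Fintype.card_fin]
    omega
  have hAcard : A.card ≤ n := by
    simpa using Finset.card_le_card (Finset.subset_univ A)
  have hsle : finrank (ZMod 2) ↥(Gg ⊓ sympCompl Gg) ≤ finrank (ZMod 2) ↥(sympCompl Gg) :=
    Submodule.finrank_mono inf_le_right
  have hkey : finrank (ZMod 2) ↥(sympCompl Gg) -
      finrank (ZMod 2) ↥(Gg ⊓ sympCompl Gg) ≤ 2 * (n - A.card) := by omega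
  have h5 : subsysLogicalQubits g ≤ (2 * (n - A.card)) / 2 :=
    Nat.div_le_div_right hkey
  rw [Nat.mul_div_cancel_left _ (by norm_num : 0 < 2)] at h5
  omega

end LCFE
namespace LCFE

open Module

lemma mem_pauliSupport {n : ℕ} {v : PauliVec n} {q : Fin n} :
    q ∈ PauliSupport v ↔ (v.1 q ≠ 0 ∨ v.2 q ≠ 0) := by
  simp [PauliSupport]

lemma not_mem_pauliSupport {n : ℕ} {v : PauliVec n} {q : Fin n}
    (h : q ∉ PauliSupport v) : v.1 q = 0 ∧ v.2 q = 0 := by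
  rw [mem_pauliSupport] at h
  push_neg at h
  exact h

/-- The main quantum bound: disjoint, pairwise non-adjacent small subsets
force `k + Σ|X| ≤ n`. -/
lemma quant {V : Type} [Fintype V] [DecidableEq V] (G : SimpleGraph V) {r : ℕ}
    (g : Fin r → PauliVec (Fintype.card V)) (π : Fin (Fintype.card V) ≃ V)
    (hloc : ∀ i : Fin r, 2 ≤ PauliWeight (g i) →
      ∀ q ∈ PauliSupport (g i), ∀ q' ∈ PauliSupport (g i), q ≠ q' → G.Adj (π q) (π q'))
    (𝒜 : Finset (Finset V))
    (hdisj : ∀ X ∈ 𝒜, ∀ Y ∈ 𝒜, X ≠ Y → Disjoint X Y)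
    (hnadj : ∀ X ∈ 𝒜, ∀ Y ∈ 𝒜, X ≠ Y → ∀ u ∈ X, ∀ v ∈ Y, ¬ G.Adj u v)
    (hsmall : ∀ X ∈ 𝒜, X.card < dressedDistance g) :
    subsysLogicalQubits g + ∑ X ∈ 𝒜, X.card ≤ Fintype.card V := by
  classical
  set Y : Finset V → Finset (Fin (Fintype.card V)) := fun X => X.image π.symm with hY
  have hYdisj : ∀ X ∈ 𝒜, ∀ X' ∈ 𝒜, X ≠ X' → Disjoint (Y X) (Y X') := by
    intro X hX X' hX' hne
    exact Finset.disjoint_image (Equiv.injective π.symm) |>.2 (hdisj X hX X' hX' hne)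
  set A : Finset (Fin (Fintype.card V)) := 𝒜.biUnion Y with hA
  have hAcard : A.card = ∑ X ∈ 𝒜, X.card := by
    rw [hA, Finset.card_biUnion hYdisj]
    exact Finset.sum_congr rfl fun X _ =>
      Finset.card_image_of_injective _ (Equiv.injective π.symm)
  have hπmem : ∀ {X : Finset V} {q : Fin (Fintype.card V)}, q ∈ Y X → π q ∈ X := by
    intro X q hq
    rcases Finset.mem_image.1 hq with ⟨v, hv, rfl⟩
    rwa [Equiv.apply_symm_apply]
  -- the key property (★)
  have hstar : ∀ u ∈ sympCompl (gaugeGroup g), u ∈ suppIn A → u ∈ gaugeGroup g := by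
    intro u hu huA
    -- each restriction u|_{Y X} is in the gauge group
    have hrest : ∀ X ∈ 𝒜, restrictL (Y X) u ∈ gaugeGroup g := by
      intro X hX
      have hcompl : restrictL (Y X) u ∈ sympCompl (gaugeGroup g) := by
        apply mem_sympCompl_span
        rintro s ⟨i, rfl⟩
        by_cases hmeet : ∃ q ∈ PauliSupport (g i), q ∈ Y X
        · rcases hmeet with ⟨q, hqsupp, hqY⟩
          -- the support of g i avoids all other pieces
          have hq' : ∀ q' ∈ PauliSupport (g i), ∀ X' ∈ 𝒜, X' ≠ X → q' ∉ Y X' := by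
            intro q' hq'supp X' hX' hne hq'Y
            have hqq' : q ≠ q' := by
              rintro rfl
              exact (Finset.disjoint_left.1 (hYdisj X' hX' X hX hne)) hq'Y hqY
            have hw : 2 ≤ PauliWeight (g i) := by
              rw [PauliWeight]
              rw [Nat.succ_le_iff]
              exact Finset.one_lt_card.2 ⟨q, hqsupp, q', hq'supp, hqq'⟩
            have hadj := hloc i hw q hqsupp q' hq'supp hqq'
            exact hnadj X hX X' hX' (fun h => hne h.symm) (π q) (hπmem hqY)
              (π q') (hπmem hq'Y) hadj
          have heq : sympForm (restrictL (Y X) u) (g i) = sympForm u (g i) := by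
            refine Finset.sum_congr rfl fun j _ => ?_
            by_cases hj : j ∈ Y X
            · simp [restrictL, hj]
            · have hL : (restrictL (Y X) u).1 j = 0 ∧ (restrictL (Y X) u).2 j = 0 := by
                constructor <;> simp [restrictL, hj]
              rw [hL.1, hL.2]
              by_cases hju : u.1 j = 0 ∧ u.2 j = 0
              · simp [hju.1, hju.2]
              · have hjA : j ∈ A := by
                  by_contra hjA
                  exact hju (huA j hjA)
                rcases Finset.mem_biUnion.1 hjA with ⟨X', hX', hjY'⟩
                have hne : X' ≠ X := fun h => hj (h ▸ hjY')
                by_cases hjs : j ∈ PauliSupport (g i)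
                · exact absurd hjY' (hq' j hjs X' hX' hne)
                · rcases not_mem_pauliSupport hjs with ⟨h1, h2⟩
                  simp [h1, h2]
          rw [heq]
          exact hu (g i) (Submodule.subset_span (Set.mem_range_self i))
        · push_neg at hmeet
          apply sympForm_eq_zero_of_disj
          intro j
          by_cases hj : j ∈ Y X
          · right
            by_cases hjs : j ∈ PauliSupport (g i)
            · exact absurd hj (hmeet j hjs)
            · exact not_mem_pauliSupport hjs
          · left
            constructor <;> simp [restrictL, hj]
      by_contra hnotG
      have hmem : PauliWeight (restrictL (Y X) u) ∈ {w : ℕ | ∃ v : PauliVec (Fintype.card V),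
          v ∈ (gaugeGroup g ⊔ sympCompl (gaugeGroup g) :
            Submodule (ZMod 2) (PauliVec (Fintype.card V))) ∧
          v ∉ gaugeGroup g ∧ PauliWeight v = w} :=
        ⟨restrictL (Y X) u, Submodule.mem_sup_right hcompl, hnotG, rfl⟩
      have hd : dressedDistance g ≤ PauliWeight (restrictL (Y X) u) := Nat.sInf_le hmem
      have hwle : PauliWeight (restrictL (Y X) u) ≤ X.card := by
        have := pauliWeight_le_of_suppIn (restrictL_mem_suppIn (Y X) u)
        rwa [Finset.card_image_of_injective _ (Equiv.injective π.symm)] at this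
      have := hsmall X hX
      omega
    -- u is the sum of its restrictions
    have hsum : u = ∑ X ∈ 𝒜, restrictL (Y X) u := by
      refine Prod.ext ?_ ?_ <;> funext j
      · rw [Prod.fst_sum, Finset.sum_apply]
        by_cases hjA : j ∈ A
        · rcases Finset.mem_biUnion.1 hjA with ⟨X₀, hX₀, hjY₀⟩
          rw [Finset.sum_eq_single_of_mem X₀ hX₀ (fun X hX hne => by
            have hj : j ∉ Y X := fun hj =>
              (Finset.disjoint_left.1 (hYdisj X hX X₀ hX₀ hne)) hj hjY₀
            simp [restrictL, hj])]
          simp [restrictL, hjY₀]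
        · rw [(huA j hjA).1]
          symm
          refine Finset.sum_eq_zero fun X hX => ?_
          have hj : j ∉ Y X := fun hj => hjA (Finset.mem_biUnion.2 ⟨X, hX, hj⟩)
          simp [restrictL, hj]
      · rw [Prod.snd_sum, Finset.sum_apply]
        by_cases hjA : j ∈ A
        · rcases Finset.mem_biUnion.1 hjA with ⟨X₀, hX₀, hjY₀⟩
          rw [Finset.sum_eq_single_of_mem X₀ hX₀ (fun X hX hne => by
            have hj : j ∉ Y X := fun hj =>
              (Finset.disjoint_left.1 (hYdisj X hX X₀ hX₀ hne)) hj hjY₀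
            simp [restrictL, hj])]
          simp [restrictL, hjY₀]
        · rw [(huA j hjA).2]
          symm
          refine Finset.sum_eq_zero fun X hX => ?_
          have hj : j ∉ Y X := fun hj => hjA (Finset.mem_biUnion.2 ⟨X, hX, hj⟩)
          simp [restrictL, hj]
    rw [hsum]
    exact Submodule.sum_mem _ fun X hX => hrest X hX
  have := quant_count g A hstar
  omega

end LCFE
namespace LCFE

/-- The potential function `m ↦ m·log₂ m`. -/
noncomputable def phi (m : ℕ) : ℝ := (m : ℝ) * Real.logb 2 m

lemma phi_nonneg (m : ℕ) : 0 ≤ phi m := by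
  unfold phi
  rcases Nat.eq_zero_or_pos m with rfl | hm
  · simp
  · have h1 : (1 : ℝ) ≤ m := by exact_mod_cast hm
    exact mul_nonneg (by positivity) (Real.logb_nonneg one_lt_two h1)

lemma phi_mono {a b : ℕ} (h : a ≤ b) : phi a ≤ phi b := by
  rcases Nat.eq_zero_or_pos a with rfl | ha
  · simpa [phi] using phi_nonneg b
  · have ha1 : (0 : ℝ) < a := by exact_mod_cast ha
    have hab : (a : ℝ) ≤ b := by exact_mod_cast h
    unfold phi
    have h1 : Real.logb 2 a ≤ Real.logb 2 b := Real.logb_le_logb_of_le one_lt_two ha1 hab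
    have h2 : 0 ≤ Real.logb 2 a := Real.logb_nonneg one_lt_two (by exact_mod_cast ha)
    nlinarith

lemma phi_split_aux {s t : ℕ} (hs : 1 ≤ s) (hst : s ≤ t) :
    (s : ℝ) + phi s + phi t ≤ phi (s + t) := by
  have hs0 : (0 : ℝ) < s := by exact_mod_cast hs
  have ht0 : (0 : ℝ) < t := by exact_mod_cast hs.trans hst
  have hstR : (s : ℝ) ≤ t := by exact_mod_cast hst
  have key : Real.logb 2 s + 1 ≤ Real.logb 2 ((s : ℝ) + t) := by
    have h2s : Real.logb 2 (2 * s) = 1 + Real.logb 2 s := by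
      rw [Real.logb_mul (by norm_num) (ne_of_gt hs0), Real.logb_self_eq_one one_lt_two]
    have hle : (2 : ℝ) * s ≤ (s : ℝ) + t := by linarith
    have h3 := Real.logb_le_logb_of_le one_lt_two (by positivity) hle
    rw [h2s] at h3
    linarith
  have hlog_t : Real.logb 2 t ≤ Real.logb 2 ((s : ℝ) + t) :=
    Real.logb_le_logb_of_le one_lt_two ht0 (by linarith)
  unfold phi
  have e1 : (s : ℝ) * Real.logb 2 s + (s : ℝ) ≤ (s : ℝ) * Real.logb 2 ((s : ℝ) + t) := by
    have := mul_le_mul_of_nonneg_left key (le_of_lt hs0)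
    nlinarith
  have e2 : (t : ℝ) * Real.logb 2 t ≤ (t : ℝ) * Real.logb 2 ((s : ℝ) + t) :=
    mul_le_mul_of_nonneg_left hlog_t (le_of_lt ht0)
  push_cast
  nlinarith

lemma phi_split {s t : ℕ} (hs : 1 ≤ s) (ht : 1 ≤ t) :
    min (s : ℝ) (t : ℝ) + phi s + phi t ≤ phi (s + t) := by
  rcases le_total s t with h | h
  · have := phi_split_aux hs h
    have hmin : min (s : ℝ) (t : ℝ) = s := min_eq_left (by exact_mod_cast h)
    linarith
  · have := phi_split_aux ht h
    have hmin : min (s : ℝ) (t : ℝ) = t := min_eq_right (by exact_mod_cast h)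
    have hcomm : phi (t + s) = phi (s + t) := by rw [Nat.add_comm]
    linarith

end LCFE
namespace LCFE

variable {V : Type} [Fintype V]

lemma decomp (G : SimpleGraph V) (α : ℝ) (hα : 0 ≤ α) (dd : ℕ) :
    ∀ N : ℕ, ∀ W : Finset V, W.card ≤ N →
      ∃ HL AL : List (Finset V),
        (∀ X ∈ HL ++ AL, X ⊆ W) ∧
        (HL ++ AL).Pairwise Disjoint ∧
        AL.Pairwise (fun X Z => ∀ u ∈ X, ∀ v ∈ Z, ¬ G.Adj u v) ∧
        (∀ X ∈ AL, X.Nonempty ∧ X.card < dd) ∧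
        (∀ X ∈ HL, dd ≤ X.card ∧ IsExpander (G.induce (↑X : Set V)) α) ∧
        ((W.card : ℝ) ≤ ((HL.map Finset.card).sum : ℕ) + ((AL.map Finset.card).sum : ℕ)
          + α * phi W.card) := by
  intro N
  induction N with
  | zero =>
    intro W hW
    refine ⟨[], [], by simp, by simp, by simp, by simp, by simp, ?_⟩
    have : W.card = 0 := Nat.le_zero.1 hW
    rw [this]
    simp [phi]
  | succ N ih =>
    intro W hW
    rcases Finset.eq_empty_or_nonempty W with rfl | hWne
    · refine ⟨[], [], by simp, by simp, by simp, by simp, by simp, ?_⟩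
      simp [phi]
    by_cases hsize : W.card < dd
    · refine ⟨[], [W], ?_, by simp, by simp, ?_, by simp, ?_⟩
      · simp
      · intro X hX
        rw [List.mem_singleton] at hX
        subst hX
        exact ⟨hWne, hsize⟩
      · simp only [List.map_nil, List.sum_nil, List.map_cons, List.sum_cons,
          List.sum_nil, Nat.cast_add]
        have := mul_nonneg hα (phi_nonneg W.card)
        push_cast
        linarith
    push_neg at hsize
    by_cases hexp : IsExpander (G.induce (↑W : Set V)) α
    · refine ⟨[W], [], ?_, by simp, by simp, by simp, ?_, ?_⟩
      · simp
      · intro X hX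
        rw [List.mem_singleton] at hX
        subst hX
        exact ⟨hsize, hexp⟩
      · simp only [List.map_cons, List.map_nil, List.sum_cons, List.sum_nil]
        have := mul_nonneg hα (phi_nonneg W.card)
        push_cast
        linarith
    -- the cut case
    · rw [IsExpander] at hexp
      push_neg at hexp
      obtain ⟨S, hSne, hSnuniv, hcut⟩ := hexp
      set S₀ : Finset V := S.image Subtype.val with hS₀def
      have hS₀sub : S₀ ⊆ W := by
        intro a ha
        rcases Finset.mem_image.1 ha with ⟨x, _, rfl⟩
        exact Finset.mem_coe.1 x.2
      have hS₀card : S₀.card = S.card :=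
        Finset.card_image_of_injective _ Subtype.val_injective
      have hS₀ne : S₀.Nonempty := hSne.image _
      set T : Finset V := W \ S₀ with hTdef
      have hTne : T.Nonempty := by
        have : ∃ x : ↥(↑W : Set V), x ∉ S := by
          by_contra h
          push_neg at h
          exact hSnuniv (Finset.eq_univ_iff_forall.2 h)
        obtain ⟨x, hx⟩ := this
        refine ⟨(x : V), Finset.mem_sdiff.2 ⟨Finset.mem_coe.1 x.2, ?_⟩⟩
        intro hmem
        rcases Finset.mem_image.1 hmem with ⟨y, hy, hyx⟩
        exact hx (by rwa [Subtype.val_injective hyx] at hy)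
      have hsum_card : S₀.card + T.card = W.card := by
        rw [hTdef]
        have := Finset.card_sdiff_add_card_eq_card hS₀sub
        omega
      have hcardW : Fintype.card ↥(↑W : Set V) = W.card := Fintype.card_coe W
      -- the cut-edge set in V
      set E₀ : Finset (V × V) := Finset.univ.filter
        (fun p : V × V => (p.1 ∈ S₀ ∧ p.2 ∈ W ∧ p.2 ∉ S₀) ∧ G.Adj p.1 p.2) with hE₀def
      have hE₀card : cutEdges (G.induce (↑W : Set V)) S = E₀.card := by
        rw [cutEdges, Finset.filter_congr_decidable]
        refine Finset.card_bij (fun p _ => ((p.1 : V), (p.2 : V))) ?_ ?_ ?_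
        · rintro ⟨a, b⟩ hp
          rw [Finset.mem_filter] at hp
          obtain ⟨-, h1, h2, h3⟩ := hp
          refine Finset.mem_filter.2 ⟨Finset.mem_univ _, ⟨?_, ?_, ?_⟩, ?_⟩
          · exact Finset.mem_image.2 ⟨a, h1, rfl⟩
          · exact Finset.mem_coe.1 b.2
          · intro hb
            rcases Finset.mem_image.1 hb with ⟨y, hy, hyb⟩
            exact h2 (by rwa [Subtype.val_injective hyb] at hy)
          · exact h3
        · rintro ⟨a, b⟩ h₁ ⟨a', b'⟩ h₂ h
          rw [Prod.mk.injEq] at h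
          exact Prod.ext (Subtype.ext h.1) (Subtype.ext h.2)
        · rintro ⟨a, b⟩ hab
          rw [Finset.mem_filter] at hab
          obtain ⟨-, ⟨ha, hbW, hbS⟩, hadj⟩ := hab
          rcases Finset.mem_image.1 ha with ⟨x, hx, rfl⟩
          refine ⟨(x, ⟨b, Finset.mem_coe.2 hbW⟩), ?_, rfl⟩
          refine Finset.mem_filter.2 ⟨Finset.mem_univ _, hx, ?_, hadj⟩
          intro hb
          exact hbS (Finset.mem_image.2 ⟨_, hb, rfl⟩)
      have hT' : T.card = W.card - S.card := by
        rw [hTdef, Finset.card_sdiff_of_subset hS₀sub, hS₀card]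
      have hcutR : (E₀.card : ℝ) < α * min (S₀.card : ℝ) (T.card : ℝ) := by
        rw [← hE₀card]
        have hc : ((Sᶜ : Finset ↥(↑W : Set V)).card : ℝ) = (T.card : ℝ) := by
          rw [Finset.card_compl, hcardW, hT']
        calc (cutEdges (G.induce (↑W : Set V)) S : ℝ)
            < α * min (S.card : ℝ) ((Sᶜ : Finset ↥(↑W : Set V)).card : ℝ) := by
              convert hcut
              rfl
          _ = α * min (S₀.card : ℝ) (T.card : ℝ) := by rw [hS₀card, hc]
      set B : Finset V := E₀.image Prod.fst with hBdef
      have hBsub : B ⊆ S₀ := by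
        intro a ha
        rcases Finset.mem_image.1 ha with ⟨p, hp, rfl⟩
        exact ((Finset.mem_filter.1 hp).2.1).1
      have hBcard : (B.card : ℝ) ≤ E₀.card := by
        exact_mod_cast Finset.card_image_le
      set W₁ : Finset V := S₀ \ B with hW₁def
      have hW₁sub : W₁ ⊆ W := fun a ha => hS₀sub (Finset.mem_sdiff.1 ha).1
      have hW₂sub : T ⊆ W := fun a ha => (Finset.mem_sdiff.1 ha).1
      have hW₁W₂ : Disjoint W₁ T := by
        refine Finset.disjoint_left.2 fun a ha ha₂ => ?_
        exact (Finset.mem_sdiff.1 ha₂).2 (Finset.mem_sdiff.1 ha).1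
      have hW₁card : W₁.card + B.card = S₀.card := by
        rw [hW₁def]
        exact Finset.card_sdiff_add_card_eq_card hBsub
      have hT1 : 1 ≤ T.card := Finset.card_pos.2 hTne
      have hS₀1 : 1 ≤ S₀.card := Finset.card_pos.2 hS₀ne
      have hWcard : W.card ≤ N + 1 := hW
      have hW₁N : W₁.card ≤ N := by omega
      have hW₂N : T.card ≤ N := by omega
      obtain ⟨HL₁, AL₁, hsub₁, hpw₁, hna₁, hA₁, hH₁, hcov₁⟩ := ih W₁ hW₁N
      obtain ⟨HL₂, AL₂, hsub₂, hpw₂, hna₂, hA₂, hH₂, hcov₂⟩ := ih T hW₂N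
      -- pieces of branch 1 are inside W₁; of branch 2 inside W₂
      have hin₁ : ∀ X, X ∈ HL₁ ++ AL₁ → X ⊆ W₁ := hsub₁
      have hin₂ : ∀ X, X ∈ HL₂ ++ AL₂ → X ⊆ T := hsub₂
      have hdisj12 : ∀ X, (X ∈ HL₁ ∨ X ∈ AL₁) → ∀ Z, (Z ∈ HL₂ ∨ Z ∈ AL₂) →
          Disjoint X Z := by
        intro X hX Z hZ
        have h1 : X ⊆ W₁ := hin₁ X (List.mem_append.2 hX)
        have h2 : Z ⊆ T := hin₂ Z (List.mem_append.2 hZ)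
        exact hW₁W₂.mono h1 h2
      -- no adjacency between branch-1 pieces and branch-2 pieces
      have hnadj12 : ∀ X, X ⊆ W₁ → ∀ Z, Z ⊆ T → ∀ u ∈ X, ∀ v ∈ Z, ¬ G.Adj u v := by
        intro X hX Z hZ u hu v hv hadj
        have huW₁ : u ∈ W₁ := hX hu
        have hvW₂ : v ∈ T := hZ hv
        have hu₁ := Finset.mem_sdiff.1 huW₁
        have hv₂ := Finset.mem_sdiff.1 hvW₂
        have hmem : (u, v) ∈ E₀ :=
          Finset.mem_filter.2 ⟨Finset.mem_univ _, ⟨hu₁.1, hv₂.1, hv₂.2⟩, hadj⟩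
        exact hu₁.2 (Finset.mem_image.2 ⟨(u, v), hmem, rfl⟩)
      refine ⟨HL₁ ++ HL₂, AL₁ ++ AL₂, ?_, ?_, ?_, ?_, ?_, ?_⟩
      · intro X hX
        rw [List.mem_append] at hX
        rcases hX with hX | hX <;> rw [List.mem_append] at hX
        · rcases hX with hX | hX
          · exact (hin₁ X (List.mem_append.2 (Or.inl hX))).trans hW₁sub
          · exact (hin₂ X (List.mem_append.2 (Or.inl hX))).trans hW₂sub
        · rcases hX with hX | hX
          · exact (hin₁ X (List.mem_append.2 (Or.inr hX))).trans hW₁sub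
          · exact (hin₂ X (List.mem_append.2 (Or.inr hX))).trans hW₂sub
      · -- pairwise disjointness
        obtain ⟨hH₁pw, hA₁pw, hcr₁⟩ := List.pairwise_append.1 hpw₁
        obtain ⟨hH₂pw, hA₂pw, hcr₂⟩ := List.pairwise_append.1 hpw₂
        refine List.pairwise_append.2 ⟨List.pairwise_append.2 ⟨hH₁pw, hH₂pw, ?_⟩,
          List.pairwise_append.2 ⟨hA₁pw, hA₂pw, ?_⟩, ?_⟩
        · intro X hX Z hZ
          exact hdisj12 X (Or.inl hX) Z (Or.inl hZ)
        · intro X hX Z hZ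
          exact hdisj12 X (Or.inr hX) Z (Or.inr hZ)
        · intro X hX Z hZ
          rw [List.mem_append] at hX hZ
          rcases hX with hX | hX <;> rcases hZ with hZ | hZ
          · exact hcr₁ X hX Z hZ
          · exact hdisj12 X (Or.inl hX) Z (Or.inr hZ)
          · exact (hdisj12 Z (Or.inr hZ) X (Or.inl hX)).symm
          · exact hcr₂ X hX Z hZ
      · -- pairwise non-adjacency of the A-pieces
        refine List.pairwise_append.2 ⟨hna₁, hna₂, ?_⟩
        intro X hX Z hZ
        exact hnadj12 X (hin₁ X (List.mem_append.2 (Or.inr hX))) Z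
          (hin₂ Z (List.mem_append.2 (Or.inr hZ)))
      · intro X hX
        rw [List.mem_append] at hX
        rcases hX with hX | hX
        · exact hA₁ X hX
        · exact hA₂ X hX
      · intro X hX
        rw [List.mem_append] at hX
        rcases hX with hX | hX
        · exact hH₁ X hX
        · exact hH₂ X hX
      · -- the covering estimate
        have hphi1 : phi W₁.card ≤ phi S₀.card := phi_mono (by omega)
        have hsplit : min (S₀.card : ℝ) (T.card : ℝ) + phi S₀.card + phi T.card ≤
            phi W.card := by
          have := phi_split hS₀1 hT1
          rw [hsum_card] at this
          exact this
        have hm1 : α * phi W₁.card ≤ α * phi S₀.card :=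
          mul_le_mul_of_nonneg_left hphi1 hα
        have hm2 : (B.card : ℝ) < α * min (S₀.card : ℝ) (T.card : ℝ) :=
          lt_of_le_of_lt hBcard hcutR
        have hsums : (((HL₁ ++ HL₂).map Finset.card).sum : ℝ) =
            ((HL₁.map Finset.card).sum : ℕ) + ((HL₂.map Finset.card).sum : ℕ) := by
          rw [List.map_append, List.sum_append]
          push_cast
          ring
        have hsums' : (((AL₁ ++ AL₂).map Finset.card).sum : ℝ) =
            ((AL₁.map Finset.card).sum : ℕ) + ((AL₂.map Finset.card).sum : ℕ) := by
          rw [List.map_append, List.sum_append]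
          push_cast
          ring
        have hWeq : (W.card : ℝ) = (W₁.card : ℝ) + B.card + T.card := by
          have h1 : (W₁.card : ℝ) + B.card = S₀.card := by exact_mod_cast hW₁card
          have h2 : (S₀.card : ℝ) + T.card = W.card := by exact_mod_cast hsum_card
          linarith
        have hmul : α * (min ((S₀.card : ℝ)) ((T.card : ℝ)) + phi S₀.card + phi T.card)
            ≤ α * phi W.card := mul_le_mul_of_nonneg_left hsplit hα
        rw [hsums, hsums', hWeq]
        have e1 : (W₁.card : ℝ) ≤ ((HL₁.map Finset.card).sum : ℕ) +
            ((AL₁.map Finset.card).sum : ℕ) + α * phi W₁.card := hcov₁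
        have e2 : (T.card : ℝ) ≤ ((HL₂.map Finset.card).sum : ℕ) +
            ((AL₂.map Finset.card).sum : ℕ) + α * phi T.card := hcov₂
        nlinarith [hm1, hm2, hmul, e1, e2]

end LCFE
/-- **Expanding subgraphs forced by local subsystem codes** (Corollary
`bound-subsystem`). There is a universal constant `c > 0` such that: if a
subsystem code on `n` qubits with `k` logical qubits and dressed distance `d` is
local on a graph `G` on `n ≥ 2` vertices (its qubits are in bijection with the
vertices and every gauge check of weight `≥ 2` is supported on pairwise adjacent
vertices), then there are pairwise disjoint vertex subsets `H_j` with
`|H_j| ≥ d/3`, `Σ_j |H_j| ≥ k/2`, each inducing a `k/(4c·log(n)·n)`-expander. -/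
theorem local_code_forces_expansion : ∃ c : ℝ, 0 < c ∧
    ∀ (V : Type) [Fintype V], ∀ (G : SimpleGraph V),
      2 ≤ Fintype.card V →
      ∀ (r : ℕ) (g : Fin r → PauliVec (Fintype.card V)) (π : Fin (Fintype.card V) ≃ V),
        (∀ i : Fin r, 2 ≤ PauliWeight (g i) →
          ∀ q ∈ PauliSupport (g i), ∀ q' ∈ PauliSupport (g i),
            q ≠ q' → G.Adj (π q) (π q')) →
        ∃ (t : ℕ) (H : Fin t → Finset V),
          (∀ j j', j ≠ j' → Disjoint (H j) (H j')) ∧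
          (∀ j, (dressedDistance g : ℝ) / 3 ≤ ((H j).card : ℝ)) ∧
          ((subsysLogicalQubits g : ℝ) / 2 ≤ ((∑ j, (H j).card : ℕ) : ℝ)) ∧
          (∀ j, IsExpander (G.induce (↑(H j) : Set V))
            ((subsysLogicalQubits g : ℝ) /
              (4 * c * Real.log (Fintype.card V) * (Fintype.card V)))) := by
  refine ⟨1, one_pos, ?_⟩
  intro V _inst G hcard r g π hloc
  classical
  set k := subsysLogicalQubits g with hkdef
  set d := dressedDistance g with hddef
  set α := (k : ℝ) / (4 * 1 * Real.log (Fintype.card V) * (Fintype.card V)) with hαdef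
  have hn2 : (2 : ℝ) ≤ (Fintype.card V : ℝ) := by exact_mod_cast hcard
  have hlogpos : 0 < Real.log (Fintype.card V) := Real.log_pos (by linarith)
  have hnpos : (0 : ℝ) < (Fintype.card V : ℝ) := by linarith
  have hα : 0 ≤ α := by
    rw [hαdef]
    apply div_nonneg (Nat.cast_nonneg k)
    positivity
  obtain ⟨HL, AL, hsub, hpw, hna, hA, hH, hcov⟩ :=
    LCFE.decomp G α hα d (Fintype.card V) Finset.univ (le_of_eq (Finset.card_univ))
  have hpwH : HL.Pairwise Disjoint := (List.pairwise_append.1 hpw).1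
  have hpwA : AL.Pairwise Disjoint := (List.pairwise_append.1 hpw).2.1
  -- the A-pieces form a Nodup list
  have hnodup : AL.Nodup := by
    refine List.Pairwise.imp_of_mem ?_ hpwA
    intro a b ha _ hd heq
    subst heq
    rw [disjoint_self] at hd
    exact (hA a ha).1.ne_empty hd
  have hsym1 : Symmetric (fun (X Y : Finset V) => Disjoint X Y) := fun X Y h => h.symm
  have hsym2 : Symmetric (fun (X Z : Finset V) => ∀ u ∈ X, ∀ v ∈ Z, ¬ G.Adj u v) :=
    fun X Z h u hu v hv hadj => h v hv u hu hadj.symm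
  -- the quantum bound applied to the A-pieces
  have hquant := LCFE.quant G g π hloc AL.toFinset
    (fun X hX Y hY hne => (haveI : Std.Symm (fun (X Y : Finset V) => Disjoint X Y) :=
        ⟨fun a b h => hsym1 h⟩; hpwA.forall) (List.mem_toFinset.1 hX)
      (List.mem_toFinset.1 hY) hne)
    (fun X hX Y hY hne => (haveI : Std.Symm (fun (X Z : Finset V) => ∀ u ∈ X, ∀ v ∈ Z, ¬ G.Adj u v) :=
        ⟨fun a b h => hsym2 h⟩; hna.forall) (List.mem_toFinset.1 hX)
      (List.mem_toFinset.1 hY) hne)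
    (fun X hX => (hA X (List.mem_toFinset.1 hX)).2)
  have hAsum : ∑ X ∈ AL.toFinset, X.card = (AL.map Finset.card).sum :=
    List.sum_toFinset _ hnodup
  rw [hAsum, ← hkdef] at hquant
  -- arithmetic on the covering estimate
  have hcovn : ((Fintype.card V : ℕ) : ℝ) ≤ ((HL.map Finset.card).sum : ℕ)
      + ((AL.map Finset.card).sum : ℕ) + α * LCFE.phi (Fintype.card V) := by
    rwa [Finset.card_univ] at hcov
  have hlog2 : (0.6931471803 : ℝ) < Real.log 2 := Real.log_two_gt_d9
  have hαphi : α * LCFE.phi (Fintype.card V) = k / (4 * Real.log 2) := by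
    rw [hαdef, LCFE.phi, Real.logb]
    field_simp
  have hklen : (k : ℝ) / (4 * Real.log 2) ≤ (k : ℝ) / 2 := by
    apply div_le_div_of_nonneg_left (Nat.cast_nonneg k) two_pos
    linarith
  have hSH : (k : ℝ) / 2 ≤ ((HL.map Finset.card).sum : ℕ) := by
    have hq : (k : ℝ) + ((AL.map Finset.card).sum : ℕ) ≤ (Fintype.card V : ℕ) := by
      exact_mod_cast hquant
    rw [hαphi] at hcovn
    linarith
  -- assemble the answer
  refine ⟨HL.length, fun j => HL.get j, ?_, ?_, ?_, ?_⟩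
  · intro j j' hne
    rcases lt_or_gt_of_ne hne with h | h
    · exact List.pairwise_iff_get.1 hpwH j j' h
    · exact (List.pairwise_iff_get.1 hpwH j' j h).symm
  · intro j
    have hmem : HL.get j ∈ HL := List.get_mem HL j
    have hdd : (d : ℝ) ≤ ((HL.get j).card : ℝ) := by
      exact_mod_cast (hH _ hmem).1
    have : (0 : ℝ) ≤ (d : ℝ) := Nat.cast_nonneg d
    linarith
  · have hsum_eq : (HL.map Finset.card).sum = ∑ j, (HL.get j).card := by
      conv_lhs => rw [← List.ofFn_get HL]
      rw [List.map_ofFn, List.sum_ofFn]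
      simp [Function.comp]
    rw [← hsum_eq]
    exact hSH
  · intro j
    have hmem : HL.get j ∈ HL := List.get_mem HL j
    exact (hH _ hmem).2
end
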